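/- arXiv:0712.1639 — 5 statements merged into one kernel-verified Lean document; each statement's English description precedes it below -/
import Mathlib

section
/- Let χ^{(2)}_1 be the principal Dirichlet character modulo 2 (χ^{(2)}_1(n) = 1 for odd n and 0 for even n) and let k ≥ 1, d ≥ 1 be integers. Then for each ω ∈ {•,★}, L^ω_d({2k}^d; {χ^{(2)}_1}^d) = (-1)^{kd} · [ Σ_{μ ⊢ d} (ε^ω_μ / z_μ) · ( (-1)^{ℓ(μ)} ∏_{j=1}^{ℓ(μ)} (2^{2kμ_j} - 1) / 2^{ℓ(μ)} ) · ∏_{j=1}^{ℓ(μ)} B_{2kμ_j}/(2kμ_j)! ] · π^{2kd}. -/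
open Complex Filter Finset Topology

noncomputable section

/-- Generalized Bernoulli numbers `B_{n,χ}`, defined via the generating function
`∑_{a=1}^{N} χ(a) t e^{at}/(e^{Nt}-1) = ∑_{n≥0} B_{n,χ} t^n/n!`.
Formally, `t e^{at}/(e^{Nt}-1) = e^{at} * g⁻¹` where `g = ∑_m N^{m+1} t^m/(m+1)!`. -/
def genBernoulli {N : ℕ} (χ : DirichletCharacter ℂ N) (n : ℕ) : ℂ :=
  (n.factorial : ℂ) *
    PowerSeries.coeff (R := ℂ) n
      (∑ a ∈ Finset.Icc 1 N, (χ a) •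
        (PowerSeries.rescale (a : ℂ) (PowerSeries.exp ℂ) *
          (PowerSeries.mk fun m => (N : ℂ) ^ (m + 1) / (m + 1).factorial)⁻¹))

/-- Euler numbers, defined by `2/(e^t + e^{-t}) = ∑ E_n t^n/n!`. -/
def eulerNumber (n : ℕ) : ℚ :=
  (n.factorial : ℚ) *
    PowerSeries.coeff (R := ℚ) n
      (2 * (PowerSeries.mk fun m => (1 + (-1 : ℚ) ^ m) / m.factorial)⁻¹)

/-- Gauss sum `τ(χ) = ∑_{a=1}^{N} χ(a) e^{2πia/N}`. -/
def gaussSum' {N : ℕ} (χ : DirichletCharacter ℂ N) : ℂ :=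
  ∑ a ∈ Finset.Icc 1 N, χ a * Complex.exp (2 * Real.pi * Complex.I * a / N)

/-- The parity `e(χ) ∈ {0,1}` of a Dirichlet character: `χ(-1) = (-1)^{e(χ)}`. -/
def charParity {N : ℕ} (χ : DirichletCharacter ℂ N) : ℕ :=
  if χ (-1) = 1 then 0 else 1

/-- `z_μ = ∏_i i^{m_i(μ)} m_i(μ)!` for a partition `μ`. -/
def zPart {d : ℕ} (μ : Nat.Partition d) : ℕ :=
  ∏ i ∈ μ.parts.toFinset, i ^ μ.parts.count i * (μ.parts.count i).factorial

/-- Truncated strict multiple `L`-sum `∑_{0<m_1<⋯<m_d≤M} ∏_j χ(m_j)/m_j^κ`. -/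
def multLSumLt {N : ℕ} (χ : DirichletCharacter ℂ N) (d κ M : ℕ) : ℂ :=
  ∑ m ∈ (Fintype.piFinset fun _ : Fin d => Finset.Icc 1 M).filter
      (fun m => ∀ i j : Fin d, i < j → m i < m j),
    ∏ j, χ (m j) / (m j : ℂ) ^ κ

/-- Truncated non-strict multiple `L`-sum `∑_{0<m_1≤⋯≤m_d≤M} ∏_j χ(m_j)/m_j^κ`. -/
def multLSumLe {N : ℕ} (χ : DirichletCharacter ℂ N) (d κ M : ℕ) : ℂ :=
  ∑ m ∈ (Fintype.piFinset fun _ : Fin d => Finset.Icc 1 M).filter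
      (fun m => ∀ i j : Fin d, i < j → m i ≤ m j),
    ∏ j, χ (m j) / (m j : ℂ) ^ κ

/-- The Euler-factor correction `α_χ(s) = ∏_{p | N, p ∤ N(χ')} (1 - χ'(p) p^{-s})`. -/
def alphaFactor {N : ℕ} (χ : DirichletCharacter ℂ N) (s : ℕ) : ℂ :=
  ∏ p ∈ N.primeFactors.filter (fun p => ¬ p ∣ χ.conductor),
    (1 - χ.primitiveCharacter p * (p : ℂ) ^ (-(s : ℤ)))

/-- The partition sum of formula (2.8) (principal character mod 2). -/
def principal2EvalSum (k d : ℕ) (strict : Bool) : ℂ :=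
  ∑ μ : Nat.Partition d,
    ((if strict then (-1 : ℂ) ^ ((d : ℤ) - μ.parts.card) else 1) / (zPart μ : ℂ)) *
    ((-1 : ℂ) ^ μ.parts.card *
        (μ.parts.map fun pj => ((2 : ℂ) ^ (2 * k * pj) - 1)).prod / 2 ^ μ.parts.card) *
    (μ.parts.map fun pj =>
      (bernoulli' (2 * k * pj) : ℂ) / ((2 * k * pj).factorial : ℂ)).prod

namespace ML

def zM (s : Multiset ℕ) : ℕ :=
  ∏ i ∈ s.toFinset, i ^ s.count i * (s.count i).factorial

lemma zPart_eq {n : ℕ} (μ : Nat.Partition n) : zPart μ = zM μ.parts := rfl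

lemma zM_cons (i : ℕ) (s : Multiset ℕ) :
    zM (i ::ₘ s) = i * (s.count i + 1) * zM s := by
  classical
  by_cases h : i ∈ s
  · have hmem : i ∈ s.toFinset := Multiset.mem_toFinset.2 h
    have ht : (i ::ₘ s).toFinset = s.toFinset := by
      rw [Multiset.toFinset_cons, Finset.insert_eq_self.2 hmem]
    rw [zM, ht, ← Finset.mul_prod_erase _ _ hmem, zM, ← Finset.mul_prod_erase _ _ hmem]
    have hprod : (∏ j ∈ s.toFinset.erase i,
        j ^ (i ::ₘ s).count j * ((i ::ₘ s).count j).factorial)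
        = ∏ j ∈ s.toFinset.erase i, j ^ s.count j * (s.count j).factorial := by
      refine Finset.prod_congr rfl fun j hj => ?_
      rw [Multiset.count_cons_of_ne (Finset.ne_of_mem_erase hj)]
    rw [hprod, Multiset.count_cons_self, pow_succ, Nat.factorial_succ]
    ring
  · have hmem : i ∉ s.toFinset := fun hc => h (Multiset.mem_toFinset.1 hc)
    rw [zM, Multiset.toFinset_cons, Finset.prod_insert hmem, Multiset.count_cons_self,
      Multiset.count_eq_zero_of_notMem h]
    have hprod : (∏ j ∈ s.toFinset,
        j ^ (i ::ₘ s).count j * ((i ::ₘ s).count j).factorial) = zM s := by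
      refine Finset.prod_congr rfl fun j hj => ?_
      rw [Multiset.count_cons_of_ne (by rintro rfl; exact hmem hj)]
    rw [hprod]
    simp [Nat.factorial]

lemma zM_pos {s : Multiset ℕ} (h : (0 : ℕ) ∉ s) : 0 < zM s := by
  refine Finset.prod_pos fun i hi => ?_
  have : i ≠ 0 := by rintro rfl; exact h (Multiset.mem_toFinset.1 hi)
  exact Nat.mul_pos (pow_pos (Nat.pos_of_ne_zero this) _) (Nat.factorial_pos _)

def pSum (r : ℕ → ℂ) (n : ℕ) : ℂ :=
  ∑ μ : Nat.Partition n, (μ.parts.map r).prod / (zM μ.parts : ℂ)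

lemma pSum_zero (r : ℕ → ℂ) : pSum r 0 = 1 := by
  rw [pSum, Finset.univ_unique, Finset.sum_singleton]
  simp [zM]

end ML

namespace ML

lemma sum_part_insert (r : ℕ → ℂ) {n i : ℕ} (hi1 : 1 ≤ i) (hin : i ≤ n) :
    ∑ μ ∈ Finset.univ.filter (fun μ : Nat.Partition n => i ∈ μ.parts),
        ((μ.parts.count i * i : ℕ) : ℂ) * ((μ.parts.map r).prod / (zM μ.parts : ℂ))
      = r i * pSum r (n - i) := by
  classical
  rw [pSum, Finset.mul_sum]
  refine Finset.sum_bij'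
    (i := fun μ hμ => (⟨μ.parts.erase i,
      fun hj => μ.parts_pos (Multiset.mem_of_mem_erase hj), ?_⟩ : Nat.Partition (n - i)))
    (j := fun ν _ => (⟨i ::ₘ ν.parts, ?_, ?_⟩ : Nat.Partition n)) ?_ ?_ ?_ ?_ ?_
  · -- sum of erase
    have hμi : i ∈ μ.parts := (Finset.mem_filter.1 hμ).2
    have h1 : i + (μ.parts.erase i).sum = μ.parts.sum := by
      rw [← Multiset.sum_cons, Multiset.cons_erase hμi]
    have := μ.parts_sum
    omega
  · -- positivity for cons
    intro j hj
    rcases Multiset.mem_cons.1 hj with rfl | hj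
    · exact hi1
    · exact ν.parts_pos hj
  · -- sum for cons
    rw [Multiset.sum_cons, ν.parts_sum]
    omega
  · intro a ha; exact Finset.mem_univ _
  · intro a ha
    simp only [Finset.mem_filter, Finset.mem_univ, true_and]
    exact Multiset.mem_cons_self _ _
  · intro a ha
    ext1
    exact Multiset.cons_erase (Finset.mem_filter.1 ha).2
  · intro a ha
    ext1
    exact Multiset.erase_cons_head _ _
  · intro μ hμ
    have hμi : i ∈ μ.parts := (Finset.mem_filter.1 hμ).2
    obtain ⟨t, hparts⟩ := Multiset.exists_cons_of_mem hμi
    have herase : μ.parts.erase i = t := by rw [hparts, Multiset.erase_cons_head]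
    have hzt : (zM t : ℂ) ≠ 0 := by
      have : (0:ℕ) ∉ t := fun h0 =>
        (Nat.lt_irrefl 0) (μ.parts_pos (by rw [hparts]; exact Multiset.mem_cons_of_mem h0))
      exact_mod_cast (zM_pos this).ne'
    have hi0 : (i : ℂ) ≠ 0 := Nat.cast_ne_zero.2 (by omega)
    have hc1 : ((t.count i : ℂ) + 1) ≠ 0 := Nat.cast_add_one_ne_zero (R := ℂ) (t.count i)
    show (((μ.parts.count i) * i : ℕ) : ℂ) * ((μ.parts.map r).prod / (zM μ.parts : ℂ))
        = r i * (((μ.parts.erase i).map r).prod / (zM (μ.parts.erase i) : ℂ))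
    rw [herase, hparts, zM_cons, Multiset.count_cons_self, Multiset.map_cons,
      Multiset.prod_cons]
    push_cast
    field_simp

lemma pSum_rec (r : ℕ → ℂ) (n : ℕ) :
    (n : ℂ) * pSum r n = ∑ i ∈ Finset.range n, r (1 + i) * pSum r (n - (1 + i)) := by
  classical
  have key : (n : ℂ) * pSum r n = ∑ i ∈ Finset.Icc 1 n, r i * pSum r (n - i) := by
    rw [pSum, Finset.mul_sum]
    have h1 : ∀ μ : Nat.Partition n,
        (n : ℂ) * ((μ.parts.map r).prod / (zM μ.parts : ℂ))
        = ∑ i ∈ μ.parts.toFinset,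
            ((μ.parts.count i * i : ℕ) : ℂ) * ((μ.parts.map r).prod / (zM μ.parts : ℂ)) := by
      intro μ
      rw [← Finset.sum_mul]
      congr 1
      have : ∑ i ∈ μ.parts.toFinset, μ.parts.count i * i = μ.parts.sum := by
        have := Finset.sum_multiset_map_count μ.parts (id : ℕ → ℕ)
        simpa [smul_eq_mul] using this.symm
      rw [← Nat.cast_sum]
      rw [this, μ.parts_sum]
    rw [Finset.sum_congr rfl fun μ _ => h1 μ]
    rw [Finset.sum_comm' (t' := Finset.Icc 1 n)
      (s' := fun i => Finset.univ.filter (fun μ : Nat.Partition n => i ∈ μ.parts)) ?_]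
    · exact Finset.sum_congr rfl fun i hi =>
        sum_part_insert r (Finset.mem_Icc.1 hi).1 (Finset.mem_Icc.1 hi).2
    · intro μ i
      constructor
      · rintro ⟨-, hi⟩
        rw [Multiset.mem_toFinset] at hi
        exact ⟨Finset.mem_filter.2 ⟨Finset.mem_univ _, hi⟩,
          Finset.mem_Icc.2 ⟨μ.parts_pos hi,
            (Multiset.le_sum_of_mem hi).trans_eq μ.parts_sum⟩⟩
      · rintro ⟨hμ, -⟩
        exact ⟨Finset.mem_univ _, Multiset.mem_toFinset.2 (Finset.mem_filter.1 hμ).2⟩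
  rw [key, ← Finset.Ico_add_one_right_eq_Icc, Finset.sum_Ico_eq_sum_range]
  simp

end ML

namespace ML

def PP (y : ℕ → ℂ) (i M : ℕ) : ℂ := ∑ m ∈ Finset.Icc 1 M, y m ^ i

def EE (y : ℕ → ℂ) : ℕ → ℕ → ℂ
  | 0, _ => 1
  | _ + 1, 0 => 0
  | d + 1, M + 1 => EE y (d + 1) M + y (M + 1) * EE y d M

def HH (y : ℕ → ℂ) : ℕ → ℕ → ℂ
  | 0, _ => 1
  | _ + 1, 0 => 0
  | d + 1, M + 1 => HH y (d + 1) M + y (M + 1) * HH y d (M + 1)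

@[simp] lemma EE_zero (y : ℕ → ℂ) (M : ℕ) : EE y 0 M = 1 := by cases M <;> rfl
@[simp] lemma EE_succ_zero (y : ℕ → ℂ) (d : ℕ) : EE y (d + 1) 0 = 0 := rfl
lemma EE_succ_succ (y : ℕ → ℂ) (d M : ℕ) :
    EE y (d + 1) (M + 1) = EE y (d + 1) M + y (M + 1) * EE y d M := rfl

@[simp] lemma HH_zero (y : ℕ → ℂ) (M : ℕ) : HH y 0 M = 1 := by cases M <;> simp [HH]
@[simp] lemma HH_succ_zero (y : ℕ → ℂ) (d : ℕ) : HH y (d + 1) 0 = 0 := by simp [HH]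
lemma HH_succ_succ (y : ℕ → ℂ) (d M : ℕ) :
    HH y (d + 1) (M + 1) = HH y (d + 1) M + y (M + 1) * HH y d (M + 1) := by
  rw [HH]

def DD (y : ℕ → ℂ) (M : ℕ) : ℕ → ℂ
  | 0 => 0
  | m + 1 => EE y m M

def DH (y : ℕ → ℂ) (M : ℕ) : ℕ → ℂ
  | 0 => 0
  | m + 1 => HH y m (M + 1)

@[simp] lemma DD_zero (y : ℕ → ℂ) (M : ℕ) : DD y M 0 = 0 := rfl
@[simp] lemma DD_succ (y : ℕ → ℂ) (M m : ℕ) : DD y M (m + 1) = EE y m M := rfl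
@[simp] lemma DH_zero (y : ℕ → ℂ) (M : ℕ) : DH y M 0 = 0 := rfl
@[simp] lemma DH_succ (y : ℕ → ℂ) (M m : ℕ) : DH y M (m + 1) = HH y m (M + 1) := rfl

lemma EE_eq_DD (y : ℕ → ℂ) (M m : ℕ) :
    EE y m (M + 1) = EE y m M + y (M + 1) * DD y M m := by
  cases m with
  | zero => simp [DD]
  | succ m => rw [EE_succ_succ, DD_succ]

lemma HH_eq_DH (y : ℕ → ℂ) (M m : ℕ) :
    HH y m (M + 1) = HH y m M + y (M + 1) * DH y M m := by
  cases m with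
  | zero => simp [DH]
  | succ m => rw [HH_succ_succ, DH_succ]

lemma PP_succ (y : ℕ → ℂ) (i M : ℕ) :
    PP y i (M + 1) = PP y i M + y (M + 1) ^ i := by
  rw [PP, PP, Finset.sum_Icc_succ_top (by omega : 1 ≤ M + 1)]

lemma EE_newton (y : ℕ → ℂ) (M n : ℕ) :
    (n : ℂ) * EE y n M
      = ∑ i ∈ Finset.range n, (-1 : ℂ) ^ i * PP y (i + 1) M * EE y (n - 1 - i) M := by
  induction M generalizing n with
  | zero =>
    cases n with
    | zero => simp
    | succ N => simp [PP]
  | succ M IH =>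
    cases n with
    | zero => simp
    | succ N =>
      set a := y (M + 1) with ha
      have hs : ∀ i ∈ Finset.range (N + 1),
          (-1 : ℂ) ^ i * PP y (i + 1) (M + 1) * EE y (N + 1 - 1 - i) (M + 1)
          = (-1 : ℂ) ^ i * PP y (i + 1) M * EE y (N - i) M
            + ((-1 : ℂ) ^ i * PP y (i + 1) M * (a * DD y M (N - i))
            + ((-1 : ℂ) ^ i * a ^ (i + 1) * EE y (N - i) M
            + (-1 : ℂ) ^ i * a ^ (i + 1) * (a * DD y M (N - i)))) := by
        intro i _
        have : N + 1 - 1 - i = N - i := by omega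
        rw [this, PP_succ, EE_eq_DD]
        ring
      rw [Finset.sum_congr rfl hs, Finset.sum_add_distrib, Finset.sum_add_distrib,
        Finset.sum_add_distrib]
      have h1 : ∑ i ∈ Finset.range (N + 1),
          (-1 : ℂ) ^ i * PP y (i + 1) M * EE y (N - i) M = (↑(N + 1)) * EE y (N + 1) M := by
        rw [IH (N + 1)]
        exact Finset.sum_congr rfl fun i _ => by rw [show N + 1 - 1 - i = N - i from by omega]
      have h2 : ∑ i ∈ Finset.range (N + 1),
          (-1 : ℂ) ^ i * PP y (i + 1) M * (a * DD y M (N - i))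
          = a * ((N : ℂ) * EE y N M) := by
        rw [Finset.sum_range_succ]
        have hlast : N - N = 0 := by omega
        rw [hlast]
        simp only [DD_zero, mul_zero, add_zero]
        rw [IH N, Finset.mul_sum]
        refine Finset.sum_congr rfl fun i hi => ?_
        have hi' : i < N := Finset.mem_range.1 hi
        have : N - i = (N - 1 - i) + 1 := by omega
        rw [this, DD_succ]
        ring
      have h34 : (∑ i ∈ Finset.range (N + 1),
            (-1 : ℂ) ^ i * a ^ (i + 1) * EE y (N - i) M)
          + ∑ i ∈ Finset.range (N + 1),
            (-1 : ℂ) ^ i * a ^ (i + 1) * (a * DD y M (N - i))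
          = a * EE y N M := by
        rw [Finset.sum_range_succ (f := fun i => (-1 : ℂ) ^ i * a ^ (i + 1) * (a * DD y M (N - i)))]
        have hlast : N - N = 0 := by omega
        rw [hlast]
        simp only [DD_zero, mul_zero, add_zero]
        rw [Finset.sum_range_succ' (f := fun i => (-1 : ℂ) ^ i * a ^ (i + 1) * EE y (N - i) M)]
        have hfirst : (-1 : ℂ) ^ 0 * a ^ (0 + 1) * EE y (N - 0) M = a * EE y N M := by
          simp
        rw [hfirst]
        have : ∑ i ∈ Finset.range N, (-1 : ℂ) ^ (i + 1) * a ^ (i + 1 + 1) * EE y (N - (i + 1)) M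
            = - ∑ i ∈ Finset.range N, (-1 : ℂ) ^ i * a ^ (i + 1) * (a * DD y M (N - i)) := by
          rw [← Finset.sum_neg_distrib]
          refine Finset.sum_congr rfl fun i hi => ?_
          have hi' : i < N := Finset.mem_range.1 hi
          have h' : N - i = (N - (i + 1)) + 1 := by omega
          rw [h', DD_succ]
          ring
        rw [this]
        ring
      rw [h1, h2, h34, EE_succ_succ]
      push_cast
      ring

lemma HH_newton (y : ℕ → ℂ) (M n : ℕ) :
    (n : ℂ) * HH y n M
      = ∑ i ∈ Finset.range n, PP y (i + 1) M * HH y (n - 1 - i) M := by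
  induction M generalizing n with
  | zero =>
    cases n with
    | zero => simp
    | succ N => simp [PP]
  | succ M IHM =>
    induction n with
    | zero => simp
    | succ N IHN =>
      set a := y (M + 1) with ha
      have hs : ∀ i ∈ Finset.range (N + 1),
          PP y (i + 1) (M + 1) * HH y (N + 1 - 1 - i) (M + 1)
          = PP y (i + 1) M * HH y (N - i) M
            + (PP y (i + 1) M * (a * DH y M (N - i))
            + a ^ (i + 1) * HH y (N - i) (M + 1)) := by
        intro i _
        have h' : N + 1 - 1 - i = N - i := by omega
        rw [h', PP_succ, HH_eq_DH y M (N - i)]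
        simp only [← ha]
        ring
      rw [Finset.sum_congr rfl hs, Finset.sum_add_distrib, Finset.sum_add_distrib]
      have h1 : ∑ i ∈ Finset.range (N + 1), PP y (i + 1) M * HH y (N - i) M
          = (↑(N + 1)) * HH y (N + 1) M := by
        rw [IHM (N + 1)]
        exact Finset.sum_congr rfl fun i _ => by rw [show N + 1 - 1 - i = N - i from by omega]
      -- second sum: drop the vanishing last term
      have h2 : ∑ i ∈ Finset.range (N + 1), PP y (i + 1) M * (a * DH y M (N - i))
          = a * ∑ i ∈ Finset.range N, PP y (i + 1) M * HH y (N - 1 - i) (M + 1) := by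
        rw [Finset.sum_range_succ, show N - N = 0 from by omega]
        rw [DH_zero]
        rw [Finset.mul_sum]
        simp only [mul_zero, add_zero]
        refine Finset.sum_congr rfl fun i hi => ?_
        have hi' : i < N := Finset.mem_range.1 hi
        rw [show N - i = (N - 1 - i) + 1 from by omega, DH_succ]
        ring
      -- third sum: peel the first term
      have h3 : ∑ i ∈ Finset.range (N + 1), a ^ (i + 1) * HH y (N - i) (M + 1)
          = a * HH y N (M + 1)
            + a * ∑ i ∈ Finset.range N, a ^ (i + 1) * HH y (N - 1 - i) (M + 1) := by
        rw [Finset.sum_range_succ' (f := fun i => a ^ (i + 1) * HH y (N - i) (M + 1))]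
        rw [Finset.mul_sum]
        have : ∀ i ∈ Finset.range N,
            a ^ (i + 1 + 1) * HH y (N - (i + 1)) (M + 1)
            = a * (a ^ (i + 1) * HH y (N - 1 - i) (M + 1)) := by
          intro i hi
          rw [show N - (i + 1) = N - 1 - i from by omega]
          ring
        rw [Finset.sum_congr rfl this]
        simp
        ring
      rw [h1, h2, h3]
      -- use the inner induction hypothesis Q(N)
      have hQ : (N : ℂ) * HH y N (M + 1)
          = ∑ i ∈ Finset.range N, PP y (i + 1) (M + 1) * HH y (N - 1 - i) (M + 1) := IHN
      have hsplit : ∑ i ∈ Finset.range N, PP y (i + 1) (M + 1) * HH y (N - 1 - i) (M + 1)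
          = (∑ i ∈ Finset.range N, PP y (i + 1) M * HH y (N - 1 - i) (M + 1))
            + ∑ i ∈ Finset.range N, a ^ (i + 1) * HH y (N - 1 - i) (M + 1) := by
        rw [← Finset.sum_add_distrib]
        refine Finset.sum_congr rfl fun i _ => ?_
        rw [PP_succ]
        ring
      have key : (∑ i ∈ Finset.range N, PP y (i + 1) M * HH y (N - 1 - i) (M + 1))
            + ∑ i ∈ Finset.range N, a ^ (i + 1) * HH y (N - 1 - i) (M + 1)
          = (N : ℂ) * HH y N (M + 1) := by rw [← hsplit, hQ]
      rw [HH_succ_succ]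
      simp only [← ha]
      push_cast
      linear_combination (-a) * key

lemma eq_of_newton (c : ℕ → ℂ) (A B : ℕ → ℂ) (h0 : A 0 = B 0)
    (hA : ∀ n : ℕ, (n : ℂ) * A n = ∑ i ∈ Finset.range n, c i * A (n - 1 - i))
    (hB : ∀ n : ℕ, (n : ℂ) * B n = ∑ i ∈ Finset.range n, c i * B (n - 1 - i)) :
    ∀ n, A n = B n := by
  intro n
  induction n using Nat.strong_induction_on with
  | _ n IH =>
    cases n with
    | zero => exact h0
    | succ N =>
      have hne : ((N + 1 : ℕ) : ℂ) ≠ 0 := by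
        exact_mod_cast (Nat.cast_add_one_ne_zero (R := ℂ) N)
      refine mul_left_cancel₀ hne ?_
      rw [hA (N + 1), hB (N + 1)]
      exact Finset.sum_congr rfl fun i hi => by rw [IH (N + 1 - 1 - i) (by omega)]

lemma EE_eq_pSum (y : ℕ → ℂ) (M d : ℕ) :
    EE y d M = pSum (fun p => (-1 : ℂ) ^ (p - 1) * PP y p M) d := by
  refine eq_of_newton (fun i => (-1 : ℂ) ^ i * PP y (i + 1) M) _ _ ?_ (EE_newton y M) ?_ d
  · rw [pSum_zero]; simp
  · intro n
    rw [pSum_rec]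
    refine Finset.sum_congr rfl fun i hi => ?_
    rw [show 1 + i - 1 = i from by omega, show n - (1 + i) = n - 1 - i from by omega,
      show 1 + i = i + 1 from by omega]

lemma HH_eq_pSum (y : ℕ → ℂ) (M d : ℕ) :
    HH y d M = pSum (fun p => PP y p M) d := by
  refine eq_of_newton (fun i => PP y (i + 1) M) _ _ ?_ (HH_newton y M) ?_ d
  · rw [pSum_zero]; simp
  · intro n
    rw [pSum_rec]
    refine Finset.sum_congr rfl fun i hi => ?_
    rw [show n - (1 + i) = n - 1 - i from by omega, show 1 + i = i + 1 from by omega]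

def SLt (y : ℕ → ℂ) (d M : ℕ) : ℂ :=
  ∑ m ∈ (Fintype.piFinset fun _ : Fin d => Finset.Icc 1 M).filter
      (fun m => ∀ i j : Fin d, i < j → m i < m j), ∏ j, y (m j)

def SLe (y : ℕ → ℂ) (d M : ℕ) : ℂ :=
  ∑ m ∈ (Fintype.piFinset fun _ : Fin d => Finset.Icc 1 M).filter
      (fun m => ∀ i j : Fin d, i < j → m i ≤ m j), ∏ j, y (m j)

lemma SLt_zero (y : ℕ → ℂ) (M : ℕ) : SLt y 0 M = 1 := by
  rw [SLt]
  rw [Finset.sum_eq_single (fun i : Fin 0 => i.elim0)]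
  · simp
  · intro b hb hne
    exact absurd (funext fun i => i.elim0) hne
  · intro h
    exact absurd (Finset.mem_filter.2
      ⟨Fintype.mem_piFinset.2 fun i => i.elim0, fun i j _ => i.elim0⟩) h

lemma SLe_zero (y : ℕ → ℂ) (M : ℕ) : SLe y 0 M = 1 := by
  rw [SLe]
  rw [Finset.sum_eq_single (fun i : Fin 0 => i.elim0)]
  · simp
  · intro b hb hne
    exact absurd (funext fun i => i.elim0) hne
  · intro h
    exact absurd (Finset.mem_filter.2
      ⟨Fintype.mem_piFinset.2 fun i => i.elim0, fun i j _ => i.elim0⟩) h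

lemma SLt_succ_zero (y : ℕ → ℂ) (d : ℕ) : SLt y (d + 1) 0 = 0 := by
  rw [SLt]
  convert Finset.sum_empty
  rw [Finset.filter_eq_empty_iff]
  intro m hm
  have := (Fintype.mem_piFinset.1 hm) 0
  simp at this

lemma SLe_succ_zero (y : ℕ → ℂ) (d : ℕ) : SLe y (d + 1) 0 = 0 := by
  rw [SLe]
  convert Finset.sum_empty
  rw [Finset.filter_eq_empty_iff]
  intro m hm
  have := (Fintype.mem_piFinset.1 hm) 0
  simp at this

lemma SLt_succ_succ (y : ℕ → ℂ) (d M : ℕ) :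
    SLt y (d + 1) (M + 1) = SLt y (d + 1) M + y (M + 1) * SLt y d M := by
  classical
  set A := (Fintype.piFinset fun _ : Fin (d+1) => Finset.Icc 1 (M+1)).filter
      (fun m => ∀ i j : Fin (d+1), i < j → m i < m j) with hA
  have hsplit := Finset.sum_filter_add_sum_filter_not A
      (fun m => m (Fin.last d) = M + 1) (fun m => ∏ j, y (m j))
  have h1 : A.filter (fun m => ¬ m (Fin.last d) = M + 1)
      = (Fintype.piFinset fun _ : Fin (d+1) => Finset.Icc 1 M).filter
        (fun m => ∀ i j : Fin (d+1), i < j → m i < m j) := by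
    ext m
    constructor
    · intro hm
      obtain ⟨hmA, hne⟩ := Finset.mem_filter.1 hm
      obtain ⟨hmem, hmono⟩ := Finset.mem_filter.1 hmA
      refine Finset.mem_filter.2 ⟨Fintype.mem_piFinset.2 fun i => ?_, hmono⟩
      have hi := Finset.mem_Icc.1 (Fintype.mem_piFinset.1 hmem i)
      have hlast := Finset.mem_Icc.1 (Fintype.mem_piFinset.1 hmem (Fin.last d))
      rw [Finset.mem_Icc]
      rcases eq_or_lt_of_le (Fin.le_last i) with heq | hlt
      · rw [heq]; omega
      · have := hmono i (Fin.last d) hlt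
        omega
    · intro hm
      obtain ⟨hmem, hmono⟩ := Finset.mem_filter.1 hm
      have hle : ∀ i, 1 ≤ m i ∧ m i ≤ M := fun i =>
        Finset.mem_Icc.1 (Fintype.mem_piFinset.1 hmem i)
      refine Finset.mem_filter.2 ⟨Finset.mem_filter.2
        ⟨Fintype.mem_piFinset.2 fun i => ?_, hmono⟩, ?_⟩
      · rw [Finset.mem_Icc]
        have := hle i; omega
      · have := hle (Fin.last d); omega
  have h2 : ∑ m ∈ A.filter (fun m => m (Fin.last d) = M + 1), ∏ j, y (m j)
      = ∑ g ∈ (Fintype.piFinset fun _ : Fin d => Finset.Icc 1 M).filter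
          (fun g => ∀ i j : Fin d, i < j → g i < g j), y (M + 1) * ∏ j, y (g j) := by
    refine Finset.sum_bij' (i := fun m _ => Fin.init m) (j := fun g _ => Fin.snoc g (M + 1))
      ?_ ?_ ?_ ?_ ?_
    · intro m hm
      obtain ⟨hmA, hlast⟩ := Finset.mem_filter.1 hm
      obtain ⟨hmem, hmono⟩ := Finset.mem_filter.1 hmA
      refine Finset.mem_filter.2 ⟨Fintype.mem_piFinset.2 fun i => ?_, fun i j hij => ?_⟩
      · have hi := Finset.mem_Icc.1 (Fintype.mem_piFinset.1 hmem i.castSucc)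
        have hlt := hmono i.castSucc (Fin.last d) (Fin.castSucc_lt_last i)
        have hinit : Fin.init m i = m i.castSucc := rfl
        rw [Finset.mem_Icc, hinit]
        omega
      · exact hmono i.castSucc j.castSucc (Fin.castSucc_lt_castSucc_iff.2 hij)
    · intro g hg
      obtain ⟨hmem, hmono⟩ := Finset.mem_filter.1 hg
      have hgle : ∀ i : Fin d, 1 ≤ g i ∧ g i ≤ M := fun i =>
        Finset.mem_Icc.1 (Fintype.mem_piFinset.1 hmem i)
      have hmem' : ∀ i : Fin (d + 1),
          (Fin.snoc g (M + 1) : Fin (d + 1) → ℕ) i ∈ Finset.Icc 1 (M + 1) := by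
        intro i
        rcases Fin.eq_castSucc_or_eq_last i with ⟨i', rfl⟩ | rfl
        · rw [Fin.snoc_castSucc, Finset.mem_Icc]
          have := hgle i'; omega
        · rw [Fin.snoc_last, Finset.mem_Icc]; omega
      have hmono' : ∀ i j : Fin (d + 1), i < j →
          (Fin.snoc g (M + 1) : Fin (d + 1) → ℕ) i
            < (Fin.snoc g (M + 1) : Fin (d + 1) → ℕ) j := by
        intro i j hij
        obtain ⟨i', rfl⟩ := Fin.exists_castSucc_eq.2 (Fin.ne_last_of_lt hij)
        rcases Fin.eq_castSucc_or_eq_last j with ⟨j', rfl⟩ | rfl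
        · rw [Fin.snoc_castSucc, Fin.snoc_castSucc]
          exact hmono i' j' (Fin.castSucc_lt_castSucc_iff.1 hij)
        · rw [Fin.snoc_castSucc, Fin.snoc_last]
          have := hgle i'; omega
      exact Finset.mem_filter.2 ⟨Finset.mem_filter.2
        ⟨Fintype.mem_piFinset.2 hmem', hmono'⟩, Fin.snoc_last _ _⟩
    · intro m hm
      have hlast : m (Fin.last d) = M + 1 := (Finset.mem_filter.1 hm).2
      rw [← hlast, Fin.snoc_init_self]
    · intro g hg
      exact Fin.init_snoc _ _
    · intro m hm
      have hlast : m (Fin.last d) = M + 1 := (Finset.mem_filter.1 hm).2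
      rw [Fin.prod_univ_castSucc (f := fun j => y (m j)), hlast, mul_comm]
      rfl
  rw [SLt, ← hsplit, h1, h2, ← Finset.mul_sum, ← SLt, ← SLt, add_comm]

lemma SLe_succ_succ (y : ℕ → ℂ) (d M : ℕ) :
    SLe y (d + 1) (M + 1) = SLe y (d + 1) M + y (M + 1) * SLe y d (M + 1) := by
  classical
  set A := (Fintype.piFinset fun _ : Fin (d+1) => Finset.Icc 1 (M+1)).filter
      (fun m => ∀ i j : Fin (d+1), i < j → m i ≤ m j) with hA
  have hsplit := Finset.sum_filter_add_sum_filter_not A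
      (fun m => m (Fin.last d) = M + 1) (fun m => ∏ j, y (m j))
  have h1 : A.filter (fun m => ¬ m (Fin.last d) = M + 1)
      = (Fintype.piFinset fun _ : Fin (d+1) => Finset.Icc 1 M).filter
        (fun m => ∀ i j : Fin (d+1), i < j → m i ≤ m j) := by
    ext m
    constructor
    · intro hm
      obtain ⟨hmA, hne⟩ := Finset.mem_filter.1 hm
      obtain ⟨hmem, hmono⟩ := Finset.mem_filter.1 hmA
      refine Finset.mem_filter.2 ⟨Fintype.mem_piFinset.2 fun i => ?_, hmono⟩
      have hi := Finset.mem_Icc.1 (Fintype.mem_piFinset.1 hmem i)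
      have hlast := Finset.mem_Icc.1 (Fintype.mem_piFinset.1 hmem (Fin.last d))
      rw [Finset.mem_Icc]
      rcases eq_or_lt_of_le (Fin.le_last i) with heq | hlt
      · rw [heq]; omega
      · have := hmono i (Fin.last d) hlt
        omega
    · intro hm
      obtain ⟨hmem, hmono⟩ := Finset.mem_filter.1 hm
      have hle : ∀ i, 1 ≤ m i ∧ m i ≤ M := fun i =>
        Finset.mem_Icc.1 (Fintype.mem_piFinset.1 hmem i)
      refine Finset.mem_filter.2 ⟨Finset.mem_filter.2
        ⟨Fintype.mem_piFinset.2 fun i => ?_, hmono⟩, ?_⟩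
      · rw [Finset.mem_Icc]
        have := hle i; omega
      · have := hle (Fin.last d); omega
  have h2 : ∑ m ∈ A.filter (fun m => m (Fin.last d) = M + 1), ∏ j, y (m j)
      = ∑ g ∈ (Fintype.piFinset fun _ : Fin d => Finset.Icc 1 (M + 1)).filter
          (fun g => ∀ i j : Fin d, i < j → g i ≤ g j), y (M + 1) * ∏ j, y (g j) := by
    refine Finset.sum_bij' (i := fun m _ => Fin.init m) (j := fun g _ => Fin.snoc g (M + 1))
      ?_ ?_ ?_ ?_ ?_
    · intro m hm
      obtain ⟨hmA, hlast⟩ := Finset.mem_filter.1 hm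
      obtain ⟨hmem, hmono⟩ := Finset.mem_filter.1 hmA
      refine Finset.mem_filter.2 ⟨Fintype.mem_piFinset.2 fun i => ?_, fun i j hij => ?_⟩
      · have hi := Finset.mem_Icc.1 (Fintype.mem_piFinset.1 hmem i.castSucc)
        have hinit : Fin.init m i = m i.castSucc := rfl
        rw [Finset.mem_Icc, hinit]
        omega
      · exact hmono i.castSucc j.castSucc (Fin.castSucc_lt_castSucc_iff.2 hij)
    · intro g hg
      obtain ⟨hmem, hmono⟩ := Finset.mem_filter.1 hg
      have hgle : ∀ i : Fin d, 1 ≤ g i ∧ g i ≤ M + 1 := fun i =>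
        Finset.mem_Icc.1 (Fintype.mem_piFinset.1 hmem i)
      have hmem' : ∀ i : Fin (d + 1),
          (Fin.snoc g (M + 1) : Fin (d + 1) → ℕ) i ∈ Finset.Icc 1 (M + 1) := by
        intro i
        rcases Fin.eq_castSucc_or_eq_last i with ⟨i', rfl⟩ | rfl
        · rw [Fin.snoc_castSucc, Finset.mem_Icc]
          have := hgle i'; omega
        · rw [Fin.snoc_last, Finset.mem_Icc]; omega
      have hmono' : ∀ i j : Fin (d + 1), i < j →
          (Fin.snoc g (M + 1) : Fin (d + 1) → ℕ) i
            ≤ (Fin.snoc g (M + 1) : Fin (d + 1) → ℕ) j := by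
        intro i j hij
        obtain ⟨i', rfl⟩ := Fin.exists_castSucc_eq.2 (Fin.ne_last_of_lt hij)
        rcases Fin.eq_castSucc_or_eq_last j with ⟨j', rfl⟩ | rfl
        · rw [Fin.snoc_castSucc, Fin.snoc_castSucc]
          exact hmono i' j' (Fin.castSucc_lt_castSucc_iff.1 hij)
        · rw [Fin.snoc_castSucc, Fin.snoc_last]
          have := hgle i'; omega
      exact Finset.mem_filter.2 ⟨Finset.mem_filter.2
        ⟨Fintype.mem_piFinset.2 hmem', hmono'⟩, Fin.snoc_last _ _⟩
    · intro m hm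
      have hlast : m (Fin.last d) = M + 1 := (Finset.mem_filter.1 hm).2
      rw [← hlast, Fin.snoc_init_self]
    · intro g hg
      exact Fin.init_snoc _ _
    · intro m hm
      have hlast : m (Fin.last d) = M + 1 := (Finset.mem_filter.1 hm).2
      rw [Fin.prod_univ_castSucc (f := fun j => y (m j)), hlast, mul_comm]
      rfl
  rw [SLe, ← hsplit, h1, h2, ← Finset.mul_sum, ← SLe, ← SLe, add_comm]

lemma SLt_eq_EE (y : ℕ → ℂ) : ∀ d M, SLt y d M = EE y d M := by
  intro d
  induction d with
  | zero => intro M; rw [SLt_zero, EE_zero]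
  | succ d IHd =>
    intro M
    induction M with
    | zero => rw [SLt_succ_zero, EE_succ_zero]
    | succ M IHM => rw [SLt_succ_succ, EE_succ_succ, IHM, IHd M]

lemma SLe_eq_HH (y : ℕ → ℂ) : ∀ d M, SLe y d M = HH y d M := by
  intro d
  induction d with
  | zero => intro M; rw [SLe_zero, HH_zero]
  | succ d IHd =>
    intro M
    induction M with
    | zero => rw [SLe_succ_zero, HH_succ_zero]
    | succ M IHM => rw [SLe_succ_succ, HH_succ_succ, IHM, IHd (M + 1)]

-- Analytic part
open Real in
def oddZ (K : ℕ) : ℝ :=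
  (1 - ((2:ℝ)^(2*K))⁻¹) *
    ((-1 : ℝ) ^ (K + 1) * (2:ℝ) ^ (2 * K - 1) * π ^ (2 * K) * bernoulli (2 * K)
      / ((2 * K).factorial : ℝ))

lemma hasSum_odd (K : ℕ) (hK : K ≠ 0) :
    HasSum (fun m : ℕ => if Odd m then 1 / (m : ℝ) ^ (2 * K) else 0) (oddZ K) := by
  have h1 := hasSum_zeta_nat hK
  set Z := (-1 : ℝ) ^ (K + 1) * (2:ℝ) ^ (2 * K - 1) * Real.pi ^ (2 * K) *
      bernoulli (2 * K) / ((2 * K).factorial : ℝ) with hZ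
  have h2 : HasSum (fun n : ℕ => 1 / ((2 * n : ℕ) : ℝ) ^ (2 * K))
      (((2:ℝ) ^ (2 * K))⁻¹ * Z) := by
    have := h1.mul_left ((2:ℝ) ^ (2 * K))⁻¹
    refine this.congr_fun fun n => ?_
    push_cast
    rw [mul_pow]
    ring
  have heven : HasSum (fun m : ℕ => if Even m then 1 / (m : ℝ) ^ (2 * K) else 0)
      (((2:ℝ) ^ (2 * K))⁻¹ * Z) := by
    have hinj : Function.Injective (fun n : ℕ => 2 * n) := fun a b h => by
      have h' : 2 * a = 2 * b := h
      omega
    rw [← Function.Injective.hasSum_iff hinj ?_]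
    · refine h2.congr_fun fun n => ?_
      simp only [Function.comp_apply]
      rw [if_pos ⟨n, two_mul n⟩]
    · intro m hm
      rw [if_neg]
      rintro ⟨t, ht⟩
      refine hm ⟨t, ?_⟩
      rw [ht]
      show 2 * t = t + t
      omega
  have h3 := h1.sub heven
  have h4 : (fun m : ℕ => 1 / (m:ℝ) ^ (2*K) - (if Even m then 1 / (m:ℝ) ^ (2*K) else 0))
      = fun m : ℕ => if Odd m then 1 / (m:ℝ) ^ (2*K) else 0 := by
    funext m
    by_cases h : Even m
    · rw [if_pos h, if_neg (by rw [Nat.not_odd_iff_even]; exact h), sub_self]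
    · rw [if_neg h, if_pos (Nat.not_even_iff_odd.1 h), sub_zero]
  rw [h4] at h3
  have hval : oddZ K = Z - ((2:ℝ) ^ (2*K))⁻¹ * Z := by rw [oddZ, ← hZ]; ring
  rw [hval]
  exact h3

lemma chi_one_apply (m : ℕ) :
    (1 : DirichletCharacter ℂ 2) (m : ZMod 2) = if Odd m then 1 else 0 := by
  by_cases h : Odd m
  · rw [if_pos h]
    refine MulChar.one_apply ?_
    have h1 : (m : ZMod 2) = 1 := by
      rw [← ZMod.natCast_mod, Nat.odd_iff.1 h, Nat.cast_one]
    rw [h1]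
    exact isUnit_one
  · rw [if_neg h]
    refine MulChar.map_nonunit _ ?_
    have h0 : (m : ZMod 2) = 0 := by
      rw [← ZMod.natCast_mod, Nat.even_iff.1 (Nat.not_odd_iff_even.1 h), Nat.cast_zero]
    rw [h0]
    exact not_isUnit_zero

def yχ (k : ℕ) : ℕ → ℂ := fun m => (1 : DirichletCharacter ℂ 2) (m : ZMod 2) / (m : ℂ) ^ (2 * k)

lemma yχ_pow (k n : ℕ) (hn : 1 ≤ n) (m : ℕ) :
    yχ k m ^ n = (((if Odd m then 1 / (m : ℝ) ^ (2 * k * n) else 0) : ℝ) : ℂ) := by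
  rw [yχ, chi_one_apply]
  by_cases h : Odd m
  · rw [if_pos h, if_pos h]
    push_cast
    rw [div_pow, one_pow, ← pow_mul, mul_assoc]
  · rw [if_neg h, if_neg h]
    rw [zero_div, zero_pow (by omega), Complex.ofReal_zero]

lemma PP_eq (k n : ℕ) (hn : 1 ≤ n) (M : ℕ) :
    PP (yχ k) n M
      = (((∑ m ∈ Finset.Icc 1 M, if Odd m then 1 / (m : ℝ) ^ (2 * k * n) else 0) : ℝ) : ℂ) := by
  rw [PP, Complex.ofReal_sum]
  exact Finset.sum_congr rfl fun m _ => yχ_pow k n hn m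

lemma tendsto_PP (k n : ℕ) (hk : 1 ≤ k) (hn : 1 ≤ n) :
    Tendsto (fun M => PP (yχ k) n M) atTop (𝓝 ((oddZ (k * n) : ℝ) : ℂ)) := by
  have hs := hasSum_odd (k * n) (by positivity)
  have ht := hs.tendsto_sum_nat
  have hsum : ∀ M : ℕ, (∑ m ∈ Finset.range (M + 1),
        if Odd m then 1 / (m : ℝ) ^ (2 * (k * n)) else 0)
      = ∑ m ∈ Finset.Icc 1 M, if Odd m then 1 / (m : ℝ) ^ (2 * (k * n)) else 0 := by
    intro M
    rw [Finset.range_eq_Ico, Finset.sum_eq_sum_Ico_succ_bot (by omega)]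
    rw [if_neg (by simp), zero_add, Finset.Ico_add_one_right_eq_Icc]
  have ht2 := ht.comp (tendsto_add_atTop_nat 1)
  have ht3 : Tendsto (fun M : ℕ => ∑ m ∈ Finset.Icc 1 M,
      if Odd m then 1 / (m : ℝ) ^ (2 * (k * n)) else 0) atTop (𝓝 (oddZ (k * n))) := by
    refine ht2.congr fun M => ?_
    exact hsum M
  have ht4 := (Complex.continuous_ofReal.tendsto _).comp ht3
  refine ht4.congr fun M => ?_
  simp only [Function.comp_apply]
  rw [PP_eq k n hn M]
  norm_num [mul_assoc]

lemma tendsto_multiset_prod (s : Multiset ℕ) (f : ℕ → ℕ → ℂ) (L : ℕ → ℂ)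
    (hf : ∀ p ∈ s, Tendsto (fun M => f M p) atTop (𝓝 (L p))) :
    Tendsto (fun M => (s.map (f M)).prod) atTop (𝓝 ((s.map L).prod)) := by
  induction s using Multiset.induction with
  | empty => simpa using tendsto_const_nhds
  | cons a t IH =>
    simp only [Multiset.map_cons, Multiset.prod_cons]
    exact (hf a (Multiset.mem_cons_self a t)).mul
      (IH fun p hp => hf p (Multiset.mem_cons_of_mem hp))

lemma tendsto_pSum (d : ℕ) (f : ℕ → ℕ → ℂ) (L : ℕ → ℂ)
    (hf : ∀ p, 1 ≤ p → Tendsto (fun M => f M p) atTop (𝓝 (L p))) :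
    Tendsto (fun M => pSum (f M) d) atTop (𝓝 (pSum L d)) := by
  simp only [pSum]
  refine tendsto_finset_sum _ fun μ _ => ?_
  exact (tendsto_multiset_prod μ.parts f L (fun p hp => hf p (μ.parts_pos hp))).div_const _

lemma sum_map_sub_one (s : Multiset ℕ) (h : ∀ p ∈ s, 1 ≤ p) :
    (s.map fun p => p - 1).sum = s.sum - Multiset.card s
      ∧ Multiset.card s ≤ s.sum := by
  induction s using Multiset.induction with
  | empty => simp
  | cons a t IH =>
    have ha : 1 ≤ a := h a (Multiset.mem_cons_self a t)
    obtain ⟨h1, h2⟩ := IH fun p hp => h p (Multiset.mem_cons_of_mem hp)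
    simp only [Multiset.map_cons, Multiset.sum_cons, Multiset.card_cons]
    omega

lemma prod_map_pow (c : ℂ) (f : ℕ → ℕ) (s : Multiset ℕ) :
    (s.map fun p => c ^ f p).prod = c ^ (s.map f).sum := by
  induction s using Multiset.induction with
  | empty => simp
  | cons a t IH =>
    simp only [Multiset.map_cons, Multiset.prod_cons, Multiset.sum_cons, pow_add, IH]

lemma sum_map_linear (k : ℕ) (s : Multiset ℕ) :
    (s.map fun p => k * p + 1).sum = k * s.sum + Multiset.card s := by
  induction s using Multiset.induction with
  | empty => simp
  | cons a t IH =>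
    simp only [Multiset.map_cons, Multiset.sum_cons, Multiset.card_cons, IH]
    ring

lemma sum_map_mul (c : ℕ) (s : Multiset ℕ) :
    (s.map fun p => c * p).sum = c * s.sum := by
  induction s using Multiset.induction with
  | empty => simp
  | cons a t IH =>
    simp only [Multiset.map_cons, Multiset.sum_cons, IH]
    ring

lemma oddZ_eq' (k p : ℕ) (hk : 1 ≤ k) (hp : 1 ≤ p) :
    ((oddZ (k * p) : ℝ) : ℂ)
      = (-1 : ℂ) ^ (k * p + 1) * ((2 : ℂ) ^ (2 * k * p) - 1) * (Real.pi : ℂ) ^ (2 * k * p)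
        * ((bernoulli' (2 * k * p) : ℂ) / ((2 * k * p).factorial : ℂ)) * (2 : ℂ)⁻¹ := by
  have hb : (bernoulli (2 * (k * p)) : ℂ) = (bernoulli' (2 * k * p) : ℂ) := by
    rw [bernoulli_eq_bernoulli'_of_ne_one (by nlinarith : 2 * (k * p) ≠ 1), mul_assoc]
  rw [oddZ]
  push_cast
  rw [hb]
  have h2 : ((2:ℂ)) ^ (2 * (k * p) - 1) = 2 ^ (2 * (k * p)) / 2 := by
    rw [eq_div_iff (two_ne_zero), ← pow_succ]
    congr 1
    have : 1 ≤ k * p := Nat.one_le_iff_ne_zero.2 (by positivity)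
    omega
  rw [h2]
  have hfac : ((2 * (k * p)).factorial : ℂ) ≠ 0 := by
    exact_mod_cast (Nat.factorial_pos _).ne'
  have hpow : ((2:ℂ)) ^ (2 * (k * p)) ≠ 0 := pow_ne_zero _ two_ne_zero
  rw [show 2 * k * p = 2 * (k * p) from by ring]
  field_simp

end ML

namespace ML

lemma pSum_eval (k d : ℕ) (hk : 1 ≤ k) (strict : Bool) :
    pSum (fun p => (if strict then (-1 : ℂ) ^ (p - 1) else 1) * ((oddZ (k * p) : ℝ) : ℂ)) d
      = (-1 : ℂ) ^ (k * d) * principal2EvalSum k d strict * (Real.pi : ℂ) ^ (2 * k * d) := by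
  rw [pSum, principal2EvalSum, Finset.mul_sum, Finset.sum_mul]
  refine Finset.sum_congr rfl fun μ _ => ?_
  have hpos : ∀ p ∈ μ.parts, 1 ≤ p := fun p hp => μ.parts_pos hp
  obtain ⟨hsub, hcards⟩ := sum_map_sub_one μ.parts hpos
  have hsum : μ.parts.sum = d := μ.parts_sum
  have hcard : Multiset.card μ.parts ≤ d := le_of_le_of_eq hcards hsum
  have hmap : μ.parts.map
        (fun p => (if strict then (-1 : ℂ) ^ (p - 1) else 1) * ((oddZ (k * p) : ℝ) : ℂ))
      = μ.parts.map (fun p => (if strict then (-1 : ℂ) ^ (p - 1) else 1) *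
          ((-1 : ℂ) ^ (k * p + 1) * (((2 : ℂ) ^ (2 * k * p) - 1) * ((Real.pi : ℂ) ^ (2 * k * p) *
            ((bernoulli' (2 * k * p) : ℂ) / ((2 * k * p).factorial : ℂ) * (2 : ℂ)⁻¹))))) := by
    refine Multiset.map_congr rfl fun p hp => ?_
    rw [oddZ_eq' k p hk (hpos p hp)]
    ring
  rw [hmap, Multiset.prod_map_mul, Multiset.prod_map_mul, Multiset.prod_map_mul,
    Multiset.prod_map_mul, Multiset.prod_map_mul]
  have e2 : (μ.parts.map fun p => (-1 : ℂ) ^ (k * p + 1)).prod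
      = (-1 : ℂ) ^ (k * d) * (-1 : ℂ) ^ (Multiset.card μ.parts) := by
    rw [prod_map_pow, sum_map_linear, hsum, pow_add]
  have e4 : (μ.parts.map fun p => (Real.pi : ℂ) ^ (2 * k * p)).prod
      = (Real.pi : ℂ) ^ (2 * k * d) := by
    rw [prod_map_pow, sum_map_mul (2 * k), hsum]
  have e6 : (μ.parts.map fun _ : ℕ => (2 : ℂ)⁻¹).prod
      = ((2 : ℂ) ^ (Multiset.card μ.parts))⁻¹ := by
    rw [Multiset.map_const', Multiset.prod_replicate, inv_pow]
  rw [e2, e4, e6, zPart_eq]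
  cases strict with
  | false =>
    simp only [Bool.false_eq_true, if_false]
    rw [Multiset.map_const', Multiset.prod_replicate, one_pow]
    ring
  | true =>
    simp only [if_true]
    have e1 : (μ.parts.map fun p => (-1 : ℂ) ^ (p - 1)).prod
        = (-1 : ℂ) ^ (d - Multiset.card μ.parts) := by
      rw [prod_map_pow, hsub, hsum]
    have hz : (-1 : ℂ) ^ ((d : ℤ) - Multiset.card μ.parts)
        = (-1 : ℂ) ^ (d - Multiset.card μ.parts) := by
      rw [show (d : ℤ) - (Multiset.card μ.parts : ℤ)
          = ((d - Multiset.card μ.parts : ℕ) : ℤ) from by omega, zpow_natCast]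
    rw [e1, hz]
    ring

end ML


/-- **Formula (2.8)**: for the principal Dirichlet character `χ^{(2)}_1` mod `2`
(which is `1 : DirichletCharacter ℂ 2`: value `1` on odd integers, `0` on even ones)
and integers `k ≥ 1`, `d ≥ 1`,
`L^ω_d({2k}^d; {χ^{(2)}_1}^d) = (-1)^{kd}
  [Σ_{μ ⊢ d} (ε^ω_μ/z_μ) ((-1)^{ℓ(μ)} ∏_j (2^{2kμ_j}-1)/2^{ℓ(μ)})
    ∏_j B_{2kμ_j}/(2kμ_j)!] π^{2kd}`.
The multiple `L`-value is expressed as the limit of its truncations. -/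
theorem multiple_L_value_principal_mod_two
    (k d : ℕ) (hk : 1 ≤ k) (hd : 1 ≤ d) :
    Tendsto (multLSumLt (1 : DirichletCharacter ℂ 2) d (2 * k)) atTop
      (𝓝 ((-1 : ℂ) ^ (k * d) * principal2EvalSum k d true *
        (Real.pi : ℂ) ^ (2 * k * d))) ∧
    Tendsto (multLSumLe (1 : DirichletCharacter ℂ 2) d (2 * k)) atTop
      (𝓝 ((-1 : ℂ) ^ (k * d) * principal2EvalSum k d false *
        (Real.pi : ℂ) ^ (2 * k * d))) := by
  have hyLt : ∀ M, multLSumLt (1 : DirichletCharacter ℂ 2) d (2 * k) M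
      = ML.pSum (fun p => (-1 : ℂ) ^ (p - 1) * ML.PP (ML.yχ k) p M) d := by
    intro M
    have h0 : multLSumLt (1 : DirichletCharacter ℂ 2) d (2 * k) M
        = ML.SLt (ML.yχ k) d M := rfl
    rw [h0, ML.SLt_eq_EE, ML.EE_eq_pSum]
  have hyLe : ∀ M, multLSumLe (1 : DirichletCharacter ℂ 2) d (2 * k) M
      = ML.pSum (fun p => ML.PP (ML.yχ k) p M) d := by
    intro M
    have h0 : multLSumLe (1 : DirichletCharacter ℂ 2) d (2 * k) M
        = ML.SLe (ML.yχ k) d M := rfl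
    rw [h0, ML.SLe_eq_HH, ML.HH_eq_pSum]
  constructor
  · have heval := ML.pSum_eval k d hk true
    simp only [if_true] at heval
    have htend : Tendsto (fun M => ML.pSum
          (fun p => (-1 : ℂ) ^ (p - 1) * ML.PP (ML.yχ k) p M) d) atTop
        (𝓝 (ML.pSum (fun p => (-1 : ℂ) ^ (p - 1) * ((ML.oddZ (k * p) : ℝ) : ℂ)) d)) :=
      ML.tendsto_pSum d _ _ (fun p hp => (ML.tendsto_PP k p hk hp).const_mul _)
    rw [heval] at htend
    exact htend.congr (fun M => (hyLt M).symm)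
  · have heval := ML.pSum_eval k d hk false
    simp only [Bool.false_eq_true, if_false, one_mul] at heval
    have htend : Tendsto (fun M => ML.pSum
          (fun p => ML.PP (ML.yχ k) p M) d) atTop
        (𝓝 (ML.pSum (fun p => ((ML.oddZ (k * p) : ℝ) : ℂ)) d)) :=
      ML.tendsto_pSum d _ _ (fun p hp => ML.tendsto_PP k p hk hp)
    rw [heval] at htend
    exact htend.congr (fun M => (hyLe M).symm)


end
end

section
/- Let χ_{-8} be the primitive real Dirichlet character modulo 8 given by the Kronecker symbol (−8/·), i.e. χ_{-8}(n) = 1 for n ≡ 1, 3 (mod 8), χ_{-8}(n) = −1 for n ≡ 5, 7 (mod 8), and χ_{-8}(n) = 0 for even n. Then the double L-value L^•_2({1}^2; {χ_{-8}}^2) := lim_{M→∞} Σ_{0<m<n≤M} χ_{-8}(m)χ_{-8}(n)/(m n) equals 0. -/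
open Complex Filter Finset Topology

noncomputable section

/-- The primitive real Dirichlet character mod 8 given by the Kronecker symbol `(-8/·)`,
i.e. `χ_{-8}(n) = 1` for `n ≡ 1, 3 (mod 8)`, `-1` for `n ≡ 5, 7 (mod 8)`, and `0` for
even `n`; this is Mathlib's `ZMod.χ₈'`, valued in `ℂ`. -/
def chiEight' : DirichletCharacter ℂ 8 := ZMod.χ₈'.ringHomComp (Int.castRingHom ℂ)

/-- The truncation `∑_{0<m<n≤M} χ_{-8}(m)χ_{-8}(n)/(mn)` of the double `L`-value
`L^•_2({1}^2; {χ_{-8}}^2)`. -/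
def doubleLSumChiEight (M : ℕ) : ℂ :=
  ∑ n ∈ Finset.Icc 1 M, ∑ m ∈ Finset.Ico 1 n,
    chiEight' m * chiEight' n / ((m : ℂ) * (n : ℂ))

namespace DoubleLChiEight

open Real

/-- The summand `χ₋₈(n)/n`. -/
def Tc (n : ℕ) : ℂ := chiEight' n / n

/-- Partial sums of the `L`-series of `χ₋₈` at `1`. -/
def Sc (M : ℕ) : ℂ := ∑ n ∈ Finset.Icc 1 M, Tc n

/-- Partial sums of the `L`-series of `χ₋₈²` at `2`. -/
def Dc (M : ℕ) : ℂ := ∑ n ∈ Finset.Icc 1 M, (Tc n)^2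

/- ### Step A : algebraic identity -/

lemma stepA (M : ℕ) : doubleLSumChiEight M = ((Sc M)^2 - Dc M)/2 := by
  induction M with
  | zero => simp [doubleLSumChiEight, Sc, Dc]
  | succ M ih =>
    have h1 : 1 ≤ M + 1 := Nat.le_add_left 1 M
    rw [doubleLSumChiEight, Finset.sum_Icc_succ_top h1, ← doubleLSumChiEight,
      Sc, Finset.sum_Icc_succ_top h1, ← Sc, Dc, Finset.sum_Icc_succ_top h1, ← Dc, ih]
    have h2 : ∑ m ∈ Finset.Ico 1 (M+1), chiEight' (m : ℕ) * chiEight' ((M+1 : ℕ)) / ((m:ℂ) * ((M+1:ℕ):ℂ))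
        = Sc M * Tc (M+1) := by
      rw [Sc, Finset.sum_mul, Finset.Ico_add_one_right_eq_Icc]
      refine Finset.sum_congr rfl fun m _ => ?_
      rw [Tc, Tc, div_mul_div_comm]
    rw [h2]
    ring

/- ### Step B : the diagonal sum converges to `π²/8` -/

def gfun (n : ℕ) : ℝ := if n % 2 = 1 then 1 / (n:ℝ)^2 else 0
def efun (n : ℕ) : ℝ := if n % 2 = 0 then 1 / (n:ℝ)^2 else 0

lemma chi_sq (n : ℕ) : (chiEight' n)^2 = if n % 2 = 1 then (1:ℂ) else 0 := by
  have h : ∀ x : ZMod 8, (ZMod.χ₈' x)^2 = if x.val % 2 = 1 then 1 else 0 := by decide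
  have hc : chiEight' (n : ZMod 8) = ((ZMod.χ₈' (n : ZMod 8) : ℤ) : ℂ) := rfl
  rw [hc, ← Int.cast_pow, h]
  have hv : ((n : ZMod 8)).val % 2 = n % 2 := by
    rw [ZMod.val_natCast, Nat.mod_mod_of_dvd n (by norm_num)]
  rw [hv]
  split_ifs <;> simp

lemma Tc_sq (n : ℕ) : (Tc n)^2 = ((gfun n : ℝ) : ℂ) := by
  rw [Tc, div_pow, chi_sq, gfun]
  split_ifs <;> push_cast <;> simp

lemma hasSum_e : HasSum efun (π^2/24) := by
  have h2 : HasSum (fun k : ℕ => efun (2*k)) (π^2/24) := by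
    have h := (hasSum_zeta_two).div_const 4
    have he : (fun k : ℕ => efun (2*k)) = fun k : ℕ => (1/(k:ℝ)^2)/4 := by
      funext k
      rw [efun]
      simp only [Nat.mul_mod_right, if_pos rfl]
      push_cast
      ring
    have hv : (π^2/24 : ℝ) = π^2/6/4 := by ring
    rw [he, hv]
    exact h
  refine (Function.Injective.hasSum_iff (f := efun) (g := fun k => 2*k)
    (fun a b h => by dsimp at h; omega) ?_).mp h2
  intro x hx
  rw [efun, if_neg]
  intro h
  exact hx ⟨x/2, by dsimp; omega⟩

lemma hasSum_g : HasSum gfun (π^2/8) := by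
  have h := hasSum_zeta_two.sub hasSum_e
  have he : (π^2/8 : ℝ) = π^2/6 - π^2/24 := by ring
  have hg : gfun = fun n : ℕ => 1/(n:ℝ)^2 - efun n := by
    funext n
    rw [gfun, efun]
    rcases Nat.even_or_odd n with ⟨k, hk⟩ | ⟨k, hk⟩ <;> subst hk
    · rw [if_neg (by omega), if_pos (by omega), sub_self]
    · rw [if_pos (by omega), if_neg (by omega), sub_zero]
  rw [he, hg]
  exact h

lemma tendsto_D : Tendsto Dc atTop (𝓝 (((π^2/8 : ℝ)) : ℂ)) := by
  have key : ∀ M, Dc M = (((∑ i ∈ Finset.range (M+1), gfun i : ℝ)) : ℂ) := by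
    intro M
    have h1 : ∑ i ∈ Finset.range (M+1), gfun i = ∑ n ∈ Finset.Icc 1 M, gfun n := by
      rw [Finset.sum_range_succ', ← Finset.Ico_add_one_right_eq_Icc, Finset.sum_Ico_eq_sum_range]
      have h0 : gfun 0 = 0 := by norm_num [gfun]
      rw [h0, add_zero, Nat.add_sub_cancel]
      exact Finset.sum_congr rfl fun i _ => by rw [add_comm]
    rw [h1, Dc, Complex.ofReal_sum]
    exact Finset.sum_congr rfl fun n _ => Tc_sq n
  rw [show Dc = fun M => (((∑ i ∈ Finset.range (M+1), gfun i : ℝ)) : ℂ) from funext key]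
  have h := hasSum_g.tendsto_sum_nat.comp (tendsto_add_atTop_nat 1)
  exact (Complex.continuous_ofReal.tendsto _).comp h

/- ### Step C : the eighth root of unity and the coefficient identity -/

def ζ8 : ℂ := (1 + I) / (Real.sqrt 2 : ℝ)
def c8 : ℂ := -I / (2 * (Real.sqrt 2 : ℝ))

lemma s2_sq : ((Real.sqrt 2 : ℝ) : ℂ)^2 = 2 := by
  rw [← Complex.ofReal_pow, Real.sq_sqrt (by norm_num)]
  norm_num

lemma s2_pos : (0:ℝ) < Real.sqrt 2 := Real.sqrt_pos.mpr (by norm_num)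

lemma s2_ne : ((Real.sqrt 2 : ℝ) : ℂ) ≠ 0 := by
  simp [s2_pos.ne']

lemma zeta8_sq : ζ8^2 = I := by
  rw [ζ8, div_pow, s2_sq]
  have h : (1 + I)^2 = 2 * I := by
    ring_nf
    rw [Complex.I_sq]
    ring
  rw [h]
  field_simp

lemma zeta8_pow4 : ζ8^4 = -1 := by
  have h : ζ8^4 = (ζ8^2)^2 := by ring
  rw [h, zeta8_sq, Complex.I_sq]

lemma zeta8_pow8 : ζ8^8 = 1 := by
  have h : ζ8^8 = (ζ8^4)^2 := by ring
  rw [h, zeta8_pow4]; ring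

lemma zeta8_red (q r : ℕ) : ζ8^(8*q+r) = ζ8^r := by
  rw [pow_add, pow_mul, zeta8_pow8, one_pow, one_mul]

lemma zeta8_p3 : ζ8^3 = I * ζ8 := by rw [pow_succ, zeta8_sq]
lemma zeta8_p5 : ζ8^5 = -ζ8 := by
  rw [show (5:ℕ) = 4+1 from rfl, pow_succ, zeta8_pow4]; ring
lemma zeta8_p6 : ζ8^6 = -I := by
  rw [show (6:ℕ) = 4+2 from rfl, pow_add, zeta8_pow4, zeta8_sq]; ring
lemma zeta8_p7 : ζ8^7 = -(I * ζ8) := by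
  rw [show (7:ℕ) = 4+3 from rfl, pow_add, zeta8_pow4, zeta8_p3]; ring

lemma norm_zeta8 : ‖ζ8‖ = 1 := by
  rw [ζ8, norm_div]
  have h1 : ‖1 + I‖ = Real.sqrt 2 := by
    rw [Complex.norm_def, Complex.normSq_apply]
    norm_num
  rw [h1, Complex.norm_real, Real.norm_eq_abs, _root_.abs_of_nonneg (Real.sqrt_nonneg 2),
    div_self s2_pos.ne']

lemma c8_zeta8 : c8 * ζ8 = -I*(1+I)/4 := by
  rw [c8, ζ8, div_mul_div_comm,
    show ((2:ℂ)*(Real.sqrt 2:ℝ))*(Real.sqrt 2:ℝ) = 2*((Real.sqrt 2:ℝ):ℂ)^2 by ring, s2_sq]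
  norm_num

lemma key_coeff (n : ℕ) :
    (chiEight' n : ℂ) = c8 * (ζ8^n + (ζ8^3)^n - (ζ8^5)^n - (ζ8^7)^n) := by
  have hc : chiEight' (n : ZMod 8) = ((ZMod.χ₈' (n : ZMod 8) : ℤ) : ℂ) := rfl
  obtain ⟨q, r, hr, rfl⟩ : ∃ q r, r < 8 ∧ n = 8*q + r :=
    ⟨n/8, n%8, Nat.mod_lt _ (by norm_num), by omega⟩
  rw [hc, show ((8*q+r : ℕ) : ZMod 8) = (r : ZMod 8) by
    push_cast; rw [show (8 : ZMod 8) = 0 by decide]; ring]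
  rw [← pow_mul ζ8 3, ← pow_mul ζ8 5, ← pow_mul ζ8 7, zeta8_red,
    show 3*(8*q+r) = 8*(3*q) + 3*r by ring, zeta8_red,
    show 5*(8*q+r) = 8*(5*q) + 5*r by ring, zeta8_red,
    show 7*(8*q+r) = 8*(7*q) + 7*r by ring, zeta8_red]
  interval_cases r
  · rw [show (ZMod.χ₈' ((0:ℕ) : ZMod 8) : ℤ) = 0 from by decide]
    norm_num
  · rw [show (ZMod.χ₈' ((1:ℕ) : ZMod 8) : ℤ) = 1 from by decide,
      pow_one, show (3*1:ℕ) = 3 from rfl, show (5*1:ℕ) = 5 from rfl,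
      show (7*1:ℕ) = 7 from rfl, zeta8_p3, zeta8_p5, zeta8_p7]
    push_cast
    linear_combination (-(2+2*I)) * c8_zeta8 + ((I+2)/2) * Complex.I_sq
  · rw [show (ZMod.χ₈' ((2:ℕ) : ZMod 8) : ℤ) = 0 from by decide,
      show (3*2:ℕ) = 6 from rfl, show (5*2:ℕ) = 8*1+2 from rfl, zeta8_red,
      show (7*2:ℕ) = 8*1+6 from rfl, zeta8_red, zeta8_sq, zeta8_p6]
    push_cast
    ring
  · rw [show (ZMod.χ₈' ((3:ℕ) : ZMod 8) : ℤ) = 1 from by decide,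
      show (3*3:ℕ) = 8*1+1 from rfl, zeta8_red, show (5*3:ℕ) = 8*1+7 from rfl, zeta8_red,
      show (7*3:ℕ) = 8*2+5 from rfl, zeta8_red,
      pow_one, zeta8_p3, zeta8_p5, zeta8_p7]
    push_cast
    linear_combination (-(2+2*I)) * c8_zeta8 + ((I+2)/2) * Complex.I_sq
  · rw [show (ZMod.χ₈' ((4:ℕ) : ZMod 8) : ℤ) = 0 from by decide,
      show (3*4:ℕ) = 8*1+4 from rfl, zeta8_red, show (5*4:ℕ) = 8*2+4 from rfl, zeta8_red,
      show (7*4:ℕ) = 8*3+4 from rfl, zeta8_red, zeta8_pow4]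
    push_cast
    ring
  · rw [show (ZMod.χ₈' ((5:ℕ) : ZMod 8) : ℤ) = -1 from by decide,
      show (3*5:ℕ) = 8*1+7 from rfl, zeta8_red, show (5*5:ℕ) = 8*3+1 from rfl, zeta8_red,
      show (7*5:ℕ) = 8*4+3 from rfl, zeta8_red,
      pow_one, zeta8_p3, zeta8_p5, zeta8_p7]
    push_cast
    linear_combination (2+2*I) * c8_zeta8 - ((I+2)/2) * Complex.I_sq
  · rw [show (ZMod.χ₈' ((6:ℕ) : ZMod 8) : ℤ) = 0 from by decide,
      show (3*6:ℕ) = 8*2+2 from rfl, zeta8_red, show (5*6:ℕ) = 8*3+6 from rfl, zeta8_red,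
      show (7*6:ℕ) = 8*5+2 from rfl, zeta8_red, zeta8_sq, zeta8_p6]
    push_cast
    ring
  · rw [show (ZMod.χ₈' ((7:ℕ) : ZMod 8) : ℤ) = -1 from by decide,
      show (3*7:ℕ) = 8*2+5 from rfl, zeta8_red, show (5*7:ℕ) = 8*4+3 from rfl, zeta8_red,
      show (7*7:ℕ) = 8*6+1 from rfl, zeta8_red,
      pow_one, zeta8_p3, zeta8_p5, zeta8_p7]
    push_cast
    linear_combination (2+2*I) * c8_zeta8 - ((I+2)/2) * Complex.I_sq

/- ### Step C : bounded character sums and convergence of the partial sums -/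

def Fc (n : ℕ) : ℂ := ∑ i ∈ Finset.range n, chiEight' (i+1 : ℕ)

lemma Fc_per (n : ℕ) : Fc (n + 8) = Fc n := by
  rw [Fc, Finset.sum_range_add, ← Fc, add_eq_left]
  have key : ∀ a : ZMod 8, ∑ j ∈ Finset.range 8, (ZMod.χ₈' (a + (j:ℕ)) : ℤ) = 0 := by decide
  have h : ∀ i : ℕ, (((n + i + 1 : ℕ)) : ZMod 8) = ((n+1 : ℕ) : ZMod 8) + ((i : ℕ) : ZMod 8) := by
    intro i; push_cast; ring
  calc ∑ i ∈ Finset.range 8, chiEight' ((n + i + 1 : ℕ))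
      = ∑ i ∈ Finset.range 8, ((ZMod.χ₈' (((n+1:ℕ) : ZMod 8) + (i:ℕ)) : ℤ) : ℂ) := by
        refine Finset.sum_congr rfl fun i _ => ?_
        rw [show chiEight' ((n + i + 1 : ℕ) : ZMod 8)
            = ((ZMod.χ₈' ((n + i + 1 : ℕ) : ZMod 8) : ℤ) : ℂ) from rfl, h i]
    _ = (((∑ i ∈ Finset.range 8, (ZMod.χ₈' (((n+1:ℕ) : ZMod 8) + (i:ℕ)) : ℤ)) : ℤ) : ℂ) := by
        push_cast; ring
    _ = 0 := by rw [key]; norm_num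

lemma chiv (k : ℕ) : chiEight' (k : ℕ) = ((ZMod.χ₈' ((k:ℕ) : ZMod 8) : ℤ) : ℂ) := rfl

lemma Fc_le (n : ℕ) : ‖Fc n‖ ≤ 2 := by
  have v1 : (ZMod.χ₈' ((1:ℕ) : ZMod 8) : ℤ) = 1 := by decide
  have v2 : (ZMod.χ₈' ((2:ℕ) : ZMod 8) : ℤ) = 0 := by decide
  have v3 : (ZMod.χ₈' ((3:ℕ) : ZMod 8) : ℤ) = 1 := by decide
  have v4 : (ZMod.χ₈' ((4:ℕ) : ZMod 8) : ℤ) = 0 := by decide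
  have v5 : (ZMod.χ₈' ((5:ℕ) : ZMod 8) : ℤ) = -1 := by decide
  have v6 : (ZMod.χ₈' ((6:ℕ) : ZMod 8) : ℤ) = 0 := by decide
  have v7 : (ZMod.χ₈' ((7:ℕ) : ZMod 8) : ℤ) = -1 := by decide
  have w1 : chiEight' (1 : ZMod 8) = 1 := by
    rw [show chiEight' (1 : ZMod 8) = ((ZMod.χ₈' (1 : ZMod 8) : ℤ) : ℂ) from rfl,
      show (ZMod.χ₈' (1 : ZMod 8) : ℤ) = 1 from by decide]; norm_num
  have w2 : chiEight' (2 : ZMod 8) = 0 := by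
    rw [show chiEight' (2 : ZMod 8) = ((ZMod.χ₈' (2 : ZMod 8) : ℤ) : ℂ) from rfl,
      show (ZMod.χ₈' (2 : ZMod 8) : ℤ) = 0 from by decide]; norm_num
  have w3 : chiEight' (3 : ZMod 8) = 1 := by
    rw [show chiEight' (3 : ZMod 8) = ((ZMod.χ₈' (3 : ZMod 8) : ℤ) : ℂ) from rfl,
      show (ZMod.χ₈' (3 : ZMod 8) : ℤ) = 1 from by decide]; norm_num
  have w4 : chiEight' (4 : ZMod 8) = 0 := by
    rw [show chiEight' (4 : ZMod 8) = ((ZMod.χ₈' (4 : ZMod 8) : ℤ) : ℂ) from rfl,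
      show (ZMod.χ₈' (4 : ZMod 8) : ℤ) = 0 from by decide]; norm_num
  have w5 : chiEight' (5 : ZMod 8) = -1 := by
    rw [show chiEight' (5 : ZMod 8) = ((ZMod.χ₈' (5 : ZMod 8) : ℤ) : ℂ) from rfl,
      show (ZMod.χ₈' (5 : ZMod 8) : ℤ) = -1 from by decide]; norm_num
  have w6 : chiEight' (6 : ZMod 8) = 0 := by
    rw [show chiEight' (6 : ZMod 8) = ((ZMod.χ₈' (6 : ZMod 8) : ℤ) : ℂ) from rfl,
      show (ZMod.χ₈' (6 : ZMod 8) : ℤ) = 0 from by decide]; norm_num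
  have w7 : chiEight' (7 : ZMod 8) = -1 := by
    rw [show chiEight' (7 : ZMod 8) = ((ZMod.χ₈' (7 : ZMod 8) : ℤ) : ℂ) from rfl,
      show (ZMod.χ₈' (7 : ZMod 8) : ℤ) = -1 from by decide]; norm_num
  induction n using Nat.strong_induction_on with
  | _ n ih =>
    rcases lt_or_ge n 8 with h | h
    · interval_cases n <;>
        norm_num [Fc, Finset.sum_range_succ, chiv, v1, v2, v3, v4, v5, v6, v7,
          w1, w2, w3, w4, w5, w6, w7]
    · have h2 : n = (n - 8) + 8 := by omega
      rw [h2, Fc_per]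
      exact ih _ (by omega)

lemma Tc_zero : Tc 0 = 0 := by
  rw [Tc]
  norm_num

lemma exists_lim : ∃ l : ℂ, Tendsto (fun n => ∑ i ∈ Finset.range n, Tc i) atTop (𝓝 l) := by
  have hanti : Antitone (fun n : ℕ => (1:ℝ)/(n+1)) := by
    intro a b hab
    have hc : (a:ℝ) + 1 ≤ (b:ℝ) + 1 := by exact_mod_cast Nat.add_le_add_right hab 1
    exact one_div_le_one_div_of_le (by positivity) hc
  have h0 : Tendsto (fun n : ℕ => (1:ℝ)/(n+1)) atTop (𝓝 0) :=
    tendsto_one_div_add_atTop_nhds_zero_nat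
  have hb : ∀ n, ‖∑ i ∈ Finset.range n, chiEight' ((i+1 : ℕ))‖ ≤ 2 := Fc_le
  have hcauchy := hanti.cauchySeq_series_mul_of_tendsto_zero_of_bounded h0 hb
  obtain ⟨l, hl⟩ := cauchySeq_tendsto_of_complete hcauchy
  refine ⟨l, ?_⟩
  have heq : ∀ n : ℕ, ∑ i ∈ Finset.range n, ((1:ℝ)/(i+1)) • chiEight' ((i+1:ℕ))
      = ∑ i ∈ Finset.range (n+1), Tc i := by
    intro n
    rw [Finset.sum_range_succ', Tc_zero, add_zero]
    refine Finset.sum_congr rfl fun i _ => ?_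
    rw [Tc, Complex.real_smul]
    push_cast
    ring
  have hl' : Tendsto (fun n => ∑ i ∈ Finset.range (n+1), Tc i) atTop (𝓝 l) := by
    rw [show (fun n => ∑ i ∈ Finset.range (n+1), Tc i)
      = fun n => ∑ i ∈ Finset.range n, ((1:ℝ)/(i+1)) • chiEight' ((i+1:ℕ)) from
        funext fun n => (heq n).symm]
    exact hl
  exact (tendsto_add_atTop_iff_nat 1).mp hl'

/- ### Step C : the logarithm closed form -/

def Gf (z : ℂ) : ℂ :=
  c8 * (-(Complex.log (1 - ζ8*z)) - Complex.log (1 - ζ8^3*z)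
    + Complex.log (1 - ζ8^5*z) + Complex.log (1 - ζ8^7*z))

lemma hasSum_G {z : ℂ} (hz : ‖z‖ < 1) : HasSum (fun n : ℕ => Tc n * z^n) (Gf z) := by
  have hn : ∀ a : ℕ, ‖ζ8^a * z‖ < 1 := by
    intro a
    rw [norm_mul, norm_pow, norm_zeta8, one_pow, one_mul]
    exact hz
  have h1 := hasSum_taylorSeries_neg_log (hn 1)
  have h3 := hasSum_taylorSeries_neg_log (hn 3)
  have h5 := hasSum_taylorSeries_neg_log (hn 5)
  have h7 := hasSum_taylorSeries_neg_log (hn 7)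
  have comb := (((h1.add h3).sub (h5.add h7)).mul_left c8)
  have hfun : (fun n : ℕ => c8 * (((ζ8^1*z)^n/n + (ζ8^3*z)^n/n) - ((ζ8^5*z)^n/n + (ζ8^7*z)^n/n)))
      = fun n : ℕ => Tc n * z^n := by
    funext n
    rw [Tc, key_coeff n, mul_pow, mul_pow, mul_pow, mul_pow, pow_one, ← pow_mul, ← pow_mul,
      ← pow_mul, mul_comm 3 n, mul_comm 5 n, mul_comm 7 n, pow_mul, pow_mul, pow_mul]
    ring
  rw [hfun] at comb
  convert comb using 1
  · rfl
  rw [Gf, pow_one]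
  ring

/- ### Step C : value at `1` -/

lemma zeta8_eq : ζ8 = (((Real.sqrt 2)⁻¹ : ℝ) : ℂ) * (1 + I) := by
  rw [ζ8, Complex.ofReal_inv]
  ring

lemma zeta8_p3_eq : ζ8^3 = (((Real.sqrt 2)⁻¹ : ℝ) : ℂ) * (-1 + I) := by
  rw [zeta8_p3, zeta8_eq]
  linear_combination (((Real.sqrt 2)⁻¹ : ℝ) : ℂ) * Complex.I_sq

lemma inv_s2_eq : Real.sqrt 2 / 2 = (Real.sqrt 2)⁻¹ := by
  rw [inv_eq_one_div, div_eq_div_iff (by norm_num : (2:ℝ) ≠ 0) s2_pos.ne',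
    Real.mul_self_sqrt (by norm_num : (0:ℝ) ≤ 2)]
  norm_num

lemma re_w1 : (1 - ζ8).re = 1 - (Real.sqrt 2)⁻¹ := by
  rw [zeta8_eq]
  simp [Complex.re_ofReal_mul]
  exact inv_s2_eq

lemma im_w1 : (1 - ζ8).im = -(Real.sqrt 2)⁻¹ := by
  rw [zeta8_eq]
  simp [Complex.im_ofReal_mul]
  exact inv_s2_eq

lemma re_w2 : (1 - ζ8^3).re = 1 + (Real.sqrt 2)⁻¹ := by
  rw [zeta8_p3_eq]
  simp [Complex.re_ofReal_mul]
  exact inv_s2_eq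

lemma im_w2 : (1 - ζ8^3).im = -(Real.sqrt 2)⁻¹ := by
  rw [zeta8_p3_eq]
  simp [Complex.im_ofReal_mul]
  exact inv_s2_eq

lemma s2_inv_lt : (Real.sqrt 2)⁻¹ < 1 := by
  rw [inv_lt_one_iff₀]
  right
  rw [show (1:ℝ) = Real.sqrt 1 from (Real.sqrt_one).symm]
  exact Real.sqrt_lt_sqrt (by norm_num) (by norm_num)

lemma s2_inv_pos : 0 < (Real.sqrt 2)⁻¹ := inv_pos.mpr s2_pos

lemma conj_w1 : (starRingEnd ℂ) (1 - ζ8) = 1 - ζ8^7 := by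
  rw [zeta8_p7, zeta8_eq]
  simp only [map_sub, map_add, map_one, map_mul, Complex.conj_ofReal, Complex.conj_I]
  linear_combination (-(((Real.sqrt 2)⁻¹ : ℝ) : ℂ)) * Complex.I_sq

lemma conj_w2 : (starRingEnd ℂ) (1 - ζ8^3) = 1 - ζ8^5 := by
  rw [zeta8_p5, zeta8_p3_eq, zeta8_eq]
  simp only [map_sub, map_add, map_one, map_mul, map_neg, Complex.conj_ofReal, Complex.conj_I]
  ring

lemma prod_w : (1 - ζ8) * (1 - ζ8^3) = ((Real.sqrt 2 : ℝ) : ℂ) * (-I) := by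
  have e1 : (1 - ζ8) * (1 - ζ8^3) = -((1+I)*ζ8) := by
    rw [show (1 - ζ8) * (1 - ζ8^3) = 1 - ζ8 - ζ8^3 + ζ8*ζ8^3 by ring,
      show ζ8*ζ8^3 = ζ8^4 by ring, zeta8_pow4, zeta8_p3]
    ring
  have e2 : (1+I)*ζ8 = ((Real.sqrt 2:ℝ):ℂ) * I := by
    rw [ζ8, mul_div_assoc', div_eq_iff s2_ne]
    linear_combination Complex.I_sq + (-I) * s2_sq
  rw [e1, e2]
  ring

lemma w1_ne : (1 - ζ8) ≠ 0 := by
  intro h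
  have h1 := im_w1
  rw [h, Complex.zero_im] at h1
  have h2 := s2_inv_pos
  linarith

lemma w2_ne : (1 - ζ8^3) ≠ 0 := by
  intro h
  have h1 := im_w2
  rw [h, Complex.zero_im] at h1
  have h2 := s2_inv_pos
  linarith

lemma arg_sum : (1 - ζ8).arg + (1 - ζ8^3).arg = -(π/2) := by
  have ha1 : (1 - ζ8).arg < 0 := Complex.arg_neg_iff.mpr (by rw [im_w1]; linarith [s2_inv_pos])
  have ha2 : (1 - ζ8^3).arg < 0 := Complex.arg_neg_iff.mpr (by rw [im_w2]; linarith [s2_inv_pos])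
  have hb1 : -(π/2) < (1 - ζ8).arg :=
    Complex.neg_pi_div_two_lt_arg_iff.mpr (Or.inl (by rw [re_w1]; linarith [s2_inv_lt]))
  have hb2 : -(π/2) < (1 - ζ8^3).arg :=
    Complex.neg_pi_div_two_lt_arg_iff.mpr (Or.inl (by rw [re_w2]; linarith [s2_inv_pos]))
  have hmem : (1 - ζ8).arg + (1 - ζ8^3).arg ∈ Set.Ioc (-π) π := by
    constructor
    · have := Real.pi_pos; linarith
    · have := Real.pi_pos; linarith
  have := (Complex.arg_mul w1_ne w2_ne hmem).symm
  rw [prod_w, Complex.arg_real_mul _ s2_pos, Complex.arg_neg_I] at this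
  exact this

lemma G_one : Gf 1 = ((π/(2*Real.sqrt 2) : ℝ) : ℂ) := by
  have hne1 : (1 - ζ8).arg ≠ π :=
    ne_of_lt (lt_of_lt_of_le (Complex.arg_neg_iff.mpr (by rw [im_w1]; linarith [s2_inv_pos]))
      Real.pi_pos.le)
  have hne2 : (1 - ζ8^3).arg ≠ π :=
    ne_of_lt (lt_of_lt_of_le (Complex.arg_neg_iff.mpr (by rw [im_w2]; linarith [s2_inv_pos]))
      Real.pi_pos.le)
  have hl1 : Complex.log (1 - ζ8^7) = (starRingEnd ℂ) (Complex.log (1 - ζ8)) := by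
    rw [← conj_w1, Complex.log_conj _ hne1]
  have hl2 : Complex.log (1 - ζ8^5) = (starRingEnd ℂ) (Complex.log (1 - ζ8^3)) := by
    rw [← conj_w2, Complex.log_conj _ hne2]
  rw [Gf, mul_one, mul_one, mul_one, mul_one, hl1, hl2]
  set u := Complex.log (1 - ζ8) with hu
  set v := Complex.log (1 - ζ8^3) with hv
  have h2 : -u - v + (starRingEnd ℂ) v + (starRingEnd ℂ) u
      = -2*((u.im + v.im : ℝ):ℂ)*I := by
    have hcu := Complex.sub_conj u
    have hcv := Complex.sub_conj v
    push_cast at hcu hcv ⊢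
    linear_combination (-hcu) - hcv
  have him : u.im + v.im = -(π/2) := by
    rw [hu, hv, Complex.log_im, Complex.log_im]
    exact arg_sum
  rw [h2, him, c8]
  have hIs : ((Real.sqrt 2 : ℝ) : ℂ) ≠ 0 := s2_ne
  push_cast
  rw [div_mul_eq_mul_div, div_eq_div_iff (by
      exact mul_ne_zero two_ne_zero hIs) (by exact mul_ne_zero two_ne_zero hIs)]
  linear_combination (-2*((Real.pi:ℝ):ℂ)*((Real.sqrt 2:ℝ):ℂ)) * Complex.I_sq

/- ### Step C : Abel's limit theorem gives the value of the limit -/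

lemma tendsto_S : Tendsto Sc atTop (𝓝 ((π/(2*Real.sqrt 2) : ℝ) : ℂ)) := by
  obtain ⟨l, hl⟩ := exists_lim
  have habel := Complex.tendsto_tsum_powerSeries_nhdsWithin_lt hl
  rw [Filter.tendsto_map'_iff] at habel
  have hG : Tendsto (fun x : ℝ => Gf x) (𝓝[<] (1:ℝ)) (𝓝 (Gf 1)) := by
    have hcont : ContinuousAt Gf 1 := by
      have hlog : ∀ a : ℕ, (1 - ζ8^a*(1:ℂ)).im ≠ 0 →
          ContinuousAt (fun z : ℂ => Complex.log (1 - ζ8^a*z)) 1 := by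
        intro a ha
        refine (continuousAt_clog ?_).comp ?_
        · exact Complex.mem_slitPlane_iff.mpr (Or.inr ha)
        · exact (continuous_const.sub (continuous_mul_left _)).continuousAt
      have h1 : ContinuousAt (fun z : ℂ => Complex.log (1 - ζ8^1*z)) 1 := by
        refine hlog 1 ?_
        rw [mul_one, pow_one, im_w1]
        exact neg_ne_zero.mpr s2_inv_pos.ne'
      have h3 : ContinuousAt (fun z : ℂ => Complex.log (1 - ζ8^3*z)) 1 := by
        refine hlog 3 ?_
        rw [mul_one, im_w2]
        exact neg_ne_zero.mpr s2_inv_pos.ne'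
      have h5 : ContinuousAt (fun z : ℂ => Complex.log (1 - ζ8^5*z)) 1 := by
        refine hlog 5 ?_
        rw [mul_one, show (1:ℂ) - ζ8^5 = (starRingEnd ℂ) (1 - ζ8^3) from conj_w2.symm,
          Complex.conj_im, im_w2, neg_neg]
        exact s2_inv_pos.ne'
      have h7 : ContinuousAt (fun z : ℂ => Complex.log (1 - ζ8^7*z)) 1 := by
        refine hlog 7 ?_
        rw [mul_one, show (1:ℂ) - ζ8^7 = (starRingEnd ℂ) (1 - ζ8) from conj_w1.symm,
          Complex.conj_im, im_w1, neg_neg]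
        exact s2_inv_pos.ne'
      have h1' : ContinuousAt (fun z : ℂ => Complex.log (1 - ζ8*z)) 1 := by
        simpa [pow_one] using h1
      exact continuousAt_const.mul (((h1'.neg.sub h3).add h5).add h7)
    exact hcont.tendsto.comp
      ((Complex.continuous_ofReal.tendsto 1).mono_left nhdsWithin_le_nhds)
  have heq : ∀ᶠ x : ℝ in 𝓝[<] (1:ℝ), Gf (x:ℂ) = ∑' n, Tc n * (x:ℂ)^n := by
    filter_upwards [Ioo_mem_nhdsLT_of_mem (show (1:ℝ) ∈ Set.Ioc (-1) 1 by constructor <;> norm_num)]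
      with x hx
    have hxn : ‖(x:ℂ)‖ < 1 := by
      rw [Complex.norm_real, Real.norm_eq_abs, abs_lt]
      exact ⟨hx.1, hx.2⟩
    exact ((hasSum_G hxn).tsum_eq).symm
  have hG' : Tendsto (fun x : ℝ => ∑' n, Tc n * (x:ℂ)^n) (𝓝[<] (1:ℝ)) (𝓝 (Gf 1)) :=
    hG.congr' heq
  have hlG : l = Gf 1 := tendsto_nhds_unique habel hG'
  have hS : ∀ M, Sc M = ∑ i ∈ Finset.range (M+1), Tc i := by
    intro M
    rw [Finset.sum_range_succ', Tc_zero, add_zero, Sc, ← Finset.Ico_add_one_right_eq_Icc,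
      Finset.sum_Ico_eq_sum_range, Nat.add_sub_cancel]
    exact Finset.sum_congr rfl fun i _ => by rw [add_comm]
  rw [show Sc = fun M => ∑ i ∈ Finset.range (M+1), Tc i from funext hS, ← G_one, ← hlG]
  exact hl.comp (tendsto_add_atTop_nat 1)

end DoubleLChiEight

/-- The double `L`-value `L^•_2({1}^2; {χ_{-8}}^2) = lim_{M→∞} ∑_{0<m<n≤M}
χ_{-8}(m)χ_{-8}(n)/(mn)` vanishes (Remark after Corollary 2.6). -/
theorem double_L_value_chi_eight_eq_zero :
    Tendsto doubleLSumChiEight atTop (𝓝 0) := by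
  open DoubleLChiEight Real in
  have h := (((tendsto_S.mul tendsto_S).sub tendsto_D).div_const 2)
  rw [show doubleLSumChiEight = fun M => ((Sc M * Sc M - Dc M)/2) from
    funext fun M => by rw [stepA M]; ring]
  have hval : ((π/(2*Real.sqrt 2) : ℝ) : ℂ) * ((π/(2*Real.sqrt 2) : ℝ) : ℂ)
      - ((π^2/8 : ℝ) : ℂ) = 0 := by
    have hs : ((Real.sqrt 2 : ℝ) : ℂ)^2 = 2 := DoubleLChiEight.s2_sq
    push_cast
    field_simp
    linear_combination (-4*((π:ℝ):ℂ)^2) * hs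
  rw [show (((π/(2*Real.sqrt 2) : ℝ) : ℂ) * ((π/(2*Real.sqrt 2) : ℝ) : ℂ)
      - ((π^2/8 : ℝ) : ℂ))/2 = 0 by rw [hval, zero_div]] at h
  exact h

end
end

section
/- For every integer k ≥ 1, the Bernoulli number B_{2k} satisfies B_{2k} = (2k)! / (2^{2k−1} (3k)!) · Σ_{n_1+⋯+n_k = k, n_i ≥ 0} multinomial(3k; 2n_1+1, …, 2n_k+1) · ζ_k^{Σ_{l=1}^{k} l·n_l}, where ζ_k := e^{2πi/k}. -/
open Complex Finset PowerSeries

noncomputable section BernoulliMultinomialAux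

def gc (n : ℕ) : ℂ := (((2*n+1).factorial : ℂ))⁻¹
def dc (j : ℕ) : ℂ := 2^(2*j+1) * (bernoulli' (2*j+2) : ℂ) / ((2*j+2).factorial : ℂ)
def gser : PowerSeries ℂ := PowerSeries.mk gc
def Dser : PowerSeries ℂ := PowerSeries.mk dc
def Sser : PowerSeries ℂ := exp ℂ - rescale (-1) (exp ℂ)
def Lser : PowerSeries ℂ := rescale 2 (bernoulli'PowerSeries ℂ) - 1 - X


lemma I1 : rescale 2 (bernoulli'PowerSeries ℂ) * Sser = C 2 * X * exp ℂ := by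
  have h1 : rescale (-1 : ℂ) (exp ℂ) * rescale 2 (exp ℂ) = exp ℂ := by
    rw [exp_mul_exp_eq_exp_add]; norm_num
  have h2 : Sser = rescale (-1) (exp ℂ) * (rescale 2 (exp ℂ) - 1) := by
    rw [mul_sub, h1, mul_one, Sser]
  have h3 : rescale (2:ℂ) (bernoulli'PowerSeries ℂ) * (rescale 2 (exp ℂ) - 1)
      = C 2 * X * rescale 2 (exp ℂ) := by
    rw [← map_one (rescale (2:ℂ)), ← map_sub, ← map_mul, bernoulli'PowerSeries_mul_exp_sub_one,
      map_mul, rescale_X]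
  calc rescale 2 (bernoulli'PowerSeries ℂ) * Sser
      = rescale 2 (bernoulli'PowerSeries ℂ) * (rescale 2 (exp ℂ) - 1) * rescale (-1) (exp ℂ) := by
        rw [h2]; ring
    _ = C 2 * X * (rescale (-1) (exp ℂ) * rescale 2 (exp ℂ)) := by rw [h3]; ring
    _ = C 2 * X * exp ℂ := by rw [h1]

lemma I2 : Lser * Sser = X * (exp ℂ + rescale (-1) (exp ℂ)) - Sser := by
  have h := I1
  have hC : (C (2:ℂ)) = 2 := map_ofNat C 2
  rw [hC] at h
  rw [Lser, sub_mul, sub_mul, h, Sser]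
  ring


lemma coeff_exp' (m : ℕ) : coeff m (exp ℂ) = ((m.factorial : ℂ))⁻¹ := by
  rw [coeff_exp, eq_ratCast]
  push_cast
  rw [one_div]

lemma coeff_S (m : ℕ) : coeff m Sser = (1 - (-1)^m) * ((m.factorial : ℂ))⁻¹ := by
  rw [Sser, map_sub, coeff_rescale, coeff_exp']
  ring

lemma coeff_S_odd (j : ℕ) : coeff (2*j+1) Sser = 2 * gc j := by
  rw [coeff_S]
  have h1 : (-1:ℂ)^(2*j+1) = -1 := by rw [pow_succ, pow_mul]; norm_num
  rw [h1, gc]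
  ring

lemma coeff_resB (m : ℕ) :
    coeff m (rescale 2 (bernoulli'PowerSeries ℂ)) =
      2^m * (bernoulli' m : ℂ) * ((m.factorial : ℂ))⁻¹ := by
  rw [coeff_rescale, bernoulli'PowerSeries, coeff_mk, eq_ratCast]
  push_cast
  ring

lemma L0 : coeff 0 Lser = 0 := by
  rw [Lser, map_sub, map_sub, coeff_resB]
  simp

lemma L1 : coeff 1 Lser = 0 := by
  rw [Lser, map_sub, map_sub, coeff_resB, bernoulli'_one]
  rw [coeff_one, coeff_X]
  norm_num

lemma Lodd (j : ℕ) : coeff (2*j+3) Lser = 0 := by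
  rw [Lser, map_sub, map_sub, coeff_resB, coeff_one, coeff_X]
  rw [bernoulli'_eq_zero_of_odd ⟨j+1, by ring⟩ (by omega), if_neg (by omega), if_neg (by omega)]
  norm_num

lemma Leven (j : ℕ) : coeff (2*j+2) Lser = 2 * dc j := by
  rw [Lser, map_sub, map_sub, coeff_resB, coeff_one, coeff_X, dc]
  rw [if_neg (by omega), if_neg (by omega)]
  have : (2:ℂ)^(2*j+2) = 2 * 2^(2*j+1) := by ring
  rw [this]
  field_simp
  ring


lemma KEY (n : ℕ) :
    ∑ p ∈ antidiagonal n, dc p.1 * gc p.2 = (n+1 : ℂ) * gc (n+1) := by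
  have h := congrArg (coeff (2*n+3)) I2
  rw [coeff_mul, map_sub] at h
  have hx : (2*n+3) = (2*n+2) + 1 := by omega
  rw [hx, coeff_succ_X_mul, ← hx] at h
  have hrhs : coeff (2*n+2) (exp ℂ + rescale (-1) (exp ℂ)) = 2 * (((2*n+2).factorial : ℂ))⁻¹ := by
    rw [map_add, coeff_rescale, coeff_exp']
    have : (-1:ℂ)^(2*n+2) = 1 := by rw [pow_succ, pow_succ, pow_mul]; norm_num
    rw [this]; ring
  have hS3 : coeff (2*n+3) Sser = 2 * (((2*n+3).factorial : ℂ))⁻¹ := by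
    have := coeff_S_odd (n+1)
    rw [show 2*(n+1)+1 = 2*n+3 by omega] at this
    rw [this, gc, show 2*(n+1)+1 = 2*n+3 by omega]
  rw [hrhs, hS3, Nat.sum_antidiagonal_eq_sum_range_succ_mk] at h
  -- reduce LHS sum to sum over even indices 2i+2
  have hinj : ∀ x ∈ range (n+1), ∀ y ∈ range (n+1), 2*x+2 = 2*y+2 → x = y := by
    intro x _ y _ h; omega
  have hsub : Finset.image (fun i => 2*i+2) (range (n+1)) ⊆ range (2*n+3+1) := by
    intro a ha
    rw [Finset.mem_image] at ha
    obtain ⟨i, hi, rfl⟩ := ha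
    rw [Finset.mem_range] at *
    omega
  have hvan : ∀ a ∈ range (2*n+3+1), a ∉ Finset.image (fun i => 2*i+2) (range (n+1)) →
      coeff a Lser * coeff (2*n+3-a) Sser = 0 := by
    intro a ha hna
    rcases Nat.even_or_odd a with ⟨j, hj⟩ | ⟨j, hj⟩
    · rcases Nat.eq_zero_or_pos j with rfl | hj0
      · rw [show a = 0 by omega, L0, zero_mul]
      · exfalso
        apply hna
        rw [Finset.mem_image]
        rw [Finset.mem_range] at ha
        exact ⟨j-1, Finset.mem_range.mpr (by omega), by omega⟩
    · rcases Nat.eq_zero_or_pos j with rfl | hj0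
      · rw [show a = 1 by omega, L1, zero_mul]
      · rw [show a = 2*(j-1)+3 by omega, Lodd, zero_mul]
  have himg : ∑ a ∈ range (2*n+3+1), coeff a Lser * coeff (2*n+3-a) Sser
      = ∑ i ∈ range (n+1), (2 * dc i) * (2 * gc (n - i)) := by
    rw [← Finset.sum_subset hsub hvan, Finset.sum_image hinj]
    apply Finset.sum_congr rfl
    intro i hi
    rw [Finset.mem_range] at hi
    rw [Leven, show 2*n+3-(2*i+2) = 2*(n-i)+1 by omega, coeff_S_odd]
  rw [himg] at h
  have hfac : ((2*n+3).factorial : ℂ) = (2*n+3) * ((2*n+2).factorial : ℂ) := by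
    rw [show (2*n+3) = (2*n+2)+1 by omega, Nat.factorial_succ]
    push_cast; ring
  have hne2 : ((2*n+2).factorial : ℂ) ≠ 0 := Nat.cast_ne_zero.mpr (Nat.factorial_ne_zero _)
  have hne3 : ((2*n+3).factorial : ℂ) ≠ 0 := Nat.cast_ne_zero.mpr (Nat.factorial_ne_zero _)
  -- h : 4 * Σ dc i gc (n-i) = 2/(2n+2)! - 2/(2n+3)!
  have hsum : ∑ i ∈ range (n+1), dc i * gc (n-i) = (n+1:ℂ) * gc (n+1) := by
    have h4 : (4:ℂ) * ∑ i ∈ range (n+1), dc i * gc (n-i)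
        = 2 * (((2*n+2).factorial : ℂ))⁻¹ - 2 * (((2*n+3).factorial : ℂ))⁻¹ := by
      rw [← h, Finset.mul_sum]
      apply Finset.sum_congr rfl
      intros; ring
    have hg : gc (n+1) = (((2*n+3).factorial : ℂ))⁻¹ := by
      rw [gc, show 2*(n+1)+1 = 2*n+3 by omega]
    rw [hg]
    have key2 : (4:ℂ) * ((n:ℂ)+1) * (((2*n+3).factorial : ℂ))⁻¹
        = 2 * (((2*n+2).factorial : ℂ))⁻¹ - 2 * (((2*n+3).factorial : ℂ))⁻¹ := by
      field_simp
      rw [hfac]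
      ring
    linear_combination (h4 - key2) / 4
  rw [Nat.sum_antidiagonal_eq_sum_range_succ_mk, hsum]



lemma gder : d⁄dX ℂ gser = Dser * gser := by
  ext n
  rw [coeff_derivative, coeff_mul, gser, Dser]
  simp only [coeff_mk]
  rw [show ∑ p ∈ antidiagonal n, dc p.1 * gc p.2 = (n+1 : ℂ) * gc (n+1) from KEY n]
  ring

lemma dres (a : ℂ) (f : PowerSeries ℂ) :
    d⁄dX ℂ (rescale a f) = C a * rescale a (d⁄dX ℂ f) := by
  ext n
  rw [coeff_derivative, coeff_C_mul, coeff_rescale, coeff_rescale, coeff_derivative, pow_succ]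
  ring

lemma prod_der {ι : Type*} (s : Finset ι) (f e : ι → PowerSeries ℂ)
    (h : ∀ i ∈ s, d⁄dX ℂ (f i) = e i * f i) :
    d⁄dX ℂ (∏ i ∈ s, f i) = (∑ i ∈ s, e i) * ∏ i ∈ s, f i := by
  induction s using Finset.cons_induction with
  | empty => simp
  | cons a s ha ih =>
    rw [Finset.prod_cons, Derivation.leibniz, smul_eq_mul, smul_eq_mul,
      ih (fun i hi => h i (Finset.mem_cons.mpr (Or.inr hi))),
      h a (Finset.mem_cons_self a s), Finset.sum_cons]
    ring



/-- **Formula (4.4)**: for every `k ≥ 1`,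
`B_{2k} = (2k)!/(2^{2k-1}(3k)!) Σ_{n_1+⋯+n_k=k} multinomial(3k; 2n_1+1,…,2n_k+1)
ζ_k^{Σ_l l n_l}`, where `ζ_k = e^{2πi/k}` and `B` is the Bernoulli number
(convention `t e^t/(e^t-1)`, which agrees with all conventions in even degree). -/
theorem bernoulli_multinomial_root_of_unity_sum (k : ℕ) (hk : 1 ≤ k) :
    (bernoulli' (2 * k) : ℂ) =
      ((2 * k).factorial : ℂ) / (2 ^ (2 * k - 1) * ((3 * k).factorial : ℂ)) *
        ∑ f ∈ Finset.Nat.antidiagonalTuple k k,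
          (Nat.multinomial Finset.univ (fun i => 2 * f i + 1) : ℂ) *
            Complex.exp (2 * Real.pi * Complex.I / k) ^ (∑ i : Fin k, ((i : ℕ) + 1) * f i) := by
  set ζ : ℂ := Complex.exp (2 * Real.pi * Complex.I / k) with hζ
  have hprim : IsPrimitiveRoot ζ k := Complex.isPrimitiveRoot_exp k (by omega)
  set P : PowerSeries ℂ := ∏ i : Fin k, rescale (ζ^((i:ℕ)+1)) gser with hP
  set D : PowerSeries ℂ :=
    ∑ i : Fin k, C (ζ^((i:ℕ)+1)) * rescale (ζ^((i:ℕ)+1)) Dser with hD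
  -- derivative identity
  have hder : d⁄dX ℂ P = D * P := by
    rw [hP, hD]
    apply prod_der
    intro i _
    rw [dres, gder, map_mul, mul_assoc]
  -- geometric sums
  have geo : ∀ m : ℕ, 1 ≤ m → m ≤ k →
      ∑ i : Fin k, (ζ^((i:ℕ)+1))^m = if m = k then (k:ℂ) else 0 := by
    intro m h1 h2
    have hrw : ∀ i : Fin k, (ζ^((i:ℕ)+1))^m = (ζ^m)^((i:ℕ)+1) := by
      intro i; rw [← pow_mul, ← pow_mul, mul_comm]
    simp_rw [hrw]
    rw [Fin.sum_univ_eq_sum_range (fun i => (ζ^m)^(i+1)) k]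
    by_cases hmk : m = k
    · subst hmk
      simp [hprim.pow_eq_one]
    · rw [if_neg hmk]
      have hne1 : ζ^m ≠ 1 := by
        intro h
        have := (hprim.pow_eq_one_iff_dvd m).mp h
        have := Nat.le_of_dvd (by omega) this
        omega
      have hgeom : ∑ i ∈ range k, (ζ^m)^i = ((ζ^m)^k - 1)/(ζ^m - 1) := geom_sum_eq hne1 k
      have hpk : (ζ^m)^k = 1 := by
        rw [← pow_mul, mul_comm, pow_mul, hprim.pow_eq_one, one_pow]
      calc ∑ i ∈ range k, (ζ^m)^(i+1) = ζ^m * ∑ i ∈ range k, (ζ^m)^i := by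
            rw [Finset.mul_sum]; exact Finset.sum_congr rfl (fun i _ => by rw [pow_succ]; ring)
        _ = 0 := by rw [hgeom, hpk]; simp
  -- coefficients of D
  have coeffD : ∀ j : ℕ, coeff j D = dc j * ∑ i : Fin k, (ζ^((i:ℕ)+1))^(j+1) := by
    intro j
    rw [hD, map_sum, Finset.mul_sum]
    apply Finset.sum_congr rfl
    intro i _
    rw [coeff_C_mul, coeff_rescale, Dser, coeff_mk, pow_succ]
    ring
  -- constant coefficient of P
  have hP0 : coeff 0 P = 1 := by
    rw [hP, coeff_zero_eq_constantCoeff, map_prod]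
    apply Finset.prod_eq_one
    intro i _
    rw [← coeff_zero_eq_constantCoeff_apply, coeff_rescale, pow_zero, one_mul, gser, coeff_mk, gc]
    norm_num
  -- the k-th coefficient of P
  have hkP : coeff k P = dc (k-1) := by
    have h1 : coeff (k-1) (d⁄dX ℂ P) = coeff k P * k := by
      rw [coeff_derivative, show k-1+1 = k by omega, Nat.cast_sub hk, Nat.cast_one]
      ring
    have h2 : coeff (k-1) (D * P) = dc (k-1) * k := by
      rw [coeff_mul]
      rw [Finset.sum_eq_single_of_mem ((k-1 : ℕ), (0:ℕ))
        (Finset.HasAntidiagonal.mem_antidiagonal.mpr (by omega))]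
      · rw [coeffD, hP0, show k-1+1 = k by omega, geo k hk le_rfl, if_pos rfl, mul_one]
      · intro p hp hne
        rw [Finset.HasAntidiagonal.mem_antidiagonal] at hp
        have hlt : p.1 < k - 1 := by
          rcases Nat.lt_or_ge p.1 (k-1) with h | h
          · exact h
          · exfalso; apply hne
            have : p.1 = k-1 := by omega
            have : p.2 = 0 := by omega
            exact Prod.ext (by omega) this
        rw [coeffD, geo (p.1+1) (by omega) (by omega), if_neg (by omega)]
        ring
    have hkne : (k : ℂ) ≠ 0 := Nat.cast_ne_zero.mpr (by omega)
    have h3 : coeff k P * (k:ℂ) = dc (k-1) * k := h1.symm.trans (by rw [hder, h2])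
    exact mul_right_cancel₀ hkne h3
  -- expand coeff k P as sum over tuples
  have hexp : coeff k P = ∑ f ∈ Finset.Nat.antidiagonalTuple k k,
      ζ ^ (∑ i : Fin k, ((i:ℕ)+1) * f i) * ∏ i : Fin k, gc (f i) := by
    rw [hP, coeff_prod]
    apply Finset.sum_nbij' (i := fun (l : Fin k →₀ ℕ) => ⇑l)
      (j := fun (f : Fin k → ℕ) => Finsupp.equivFunOnFinite.symm f)
    · intro l hl
      rw [Finset.mem_finsuppAntidiag] at hl
      rw [Finset.Nat.mem_antidiagonalTuple]
      exact hl.1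
    · intro f hf
      rw [Finset.Nat.mem_antidiagonalTuple] at hf
      rw [Finset.mem_finsuppAntidiag]
      refine ⟨?_, Finset.subset_univ _⟩
      simpa using hf
    · intro l _
      exact Finsupp.equivFunOnFinite.symm_apply_apply l
    · intro f _
      exact Finsupp.equivFunOnFinite.apply_symm_apply f
    · intro l _
      simp only [coeff_rescale, gser, coeff_mk]
      rw [Finset.prod_mul_distrib]
      congr 1
      rw [← Finset.prod_pow_eq_pow_sum]
      exact Finset.prod_congr rfl (fun i _ => by rw [pow_mul])
  -- multinomial terms
  have hmult : ∀ f ∈ Finset.Nat.antidiagonalTuple k k,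
      (Nat.multinomial Finset.univ (fun i => 2 * f i + 1) : ℂ) =
        ((3*k).factorial : ℂ) * ∏ i : Fin k, gc (f i) := by
    intro f hf
    rw [Finset.Nat.mem_antidiagonalTuple] at hf
    have hsum3 : ∑ i : Fin k, (2 * f i + 1) = 3 * k := by
      rw [Finset.sum_add_distrib, ← Finset.mul_sum, hf, Finset.sum_const, Finset.card_univ,
        Fintype.card_fin, smul_eq_mul, mul_one]
      omega
    have spec := Nat.multinomial_spec (Finset.univ : Finset (Fin k)) (fun i => 2 * f i + 1)
    rw [hsum3] at spec
    have specC : (∏ i : Fin k, (((2 * f i + 1).factorial : ℕ) : ℂ)) *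
        (Nat.multinomial Finset.univ (fun i => 2 * f i + 1) : ℂ) = (((3*k).factorial : ℕ) : ℂ) := by
      exact_mod_cast congrArg (Nat.cast : ℕ → ℂ) spec
    have hprodne : (∏ i : Fin k, (((2 * f i + 1).factorial : ℕ) : ℂ)) ≠ 0 :=
      Finset.prod_ne_zero_iff.mpr fun i _ => Nat.cast_ne_zero.mpr (Nat.factorial_ne_zero _)
    have hgcprod : ∏ i : Fin k, gc (f i) = (∏ i : Fin k, (((2 * f i + 1).factorial : ℕ) : ℂ))⁻¹ := by
      rw [← Finset.prod_inv_distrib]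
      exact Finset.prod_congr rfl (fun i _ => by rw [gc])
    rw [hgcprod]
    field_simp
    linear_combination specC
  -- assemble
  have hsumeq : ∑ f ∈ Finset.Nat.antidiagonalTuple k k,
      (Nat.multinomial Finset.univ (fun i => 2 * f i + 1) : ℂ) *
        ζ ^ (∑ i : Fin k, ((i : ℕ) + 1) * f i)
      = ((3*k).factorial : ℂ) * dc (k-1) := by
    rw [← hkP, hexp, Finset.mul_sum]
    apply Finset.sum_congr rfl
    intro f hf
    rw [hmult f hf]
    ring
  rw [hsumeq, dc, show 2*(k-1)+1 = 2*k-1 by omega, show 2*(k-1)+2 = 2*k by omega]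
  have h1 : ((2*k).factorial : ℂ) ≠ 0 := Nat.cast_ne_zero.mpr (Nat.factorial_ne_zero _)
  have h2 : ((3*k).factorial : ℂ) ≠ 0 := Nat.cast_ne_zero.mpr (Nat.factorial_ne_zero _)
  have h3 : (2:ℂ)^(2*k-1) ≠ 0 := pow_ne_zero _ two_ne_zero
  field_simp

end BernoulliMultinomialAux
end

section
/- For every integer k ≥ 1, the Bernoulli number B_{2k} satisfies B_{2k} = 1 / (2^{2k−1} (2^{2k} − 1)) · Σ_{n_1+⋯+n_k = k, n_i ≥ 0} multinomial(2k; 2n_1, …, 2n_k) · ζ_k^{Σ_{l=1}^{k} l·n_l}, where ζ_k := e^{2πi/k}. -/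
open Complex Finset

noncomputable section
namespace BernAux
open PowerSeries Finset

abbrev E (a : ℂ) : ℂ⟦X⟧ := rescale a (PowerSeries.exp ℂ)

lemma E_mul (a b : ℂ) : E a * E b = E (a + b) := exp_mul_exp_eq_exp_add a b

lemma E_zero : E 0 = 1 := by rw [E, rescale_zero]; simp

lemma coeff_E (a : ℂ) (n : ℕ) : coeff (R := ℂ) n (E a) = a ^ n / ((Nat.factorial n : ℕ) : ℂ) := by
  rw [E, coeff_rescale, coeff_exp]
  rw [show ((algebraMap ℚ ℂ) (1 / (Nat.factorial n : ℚ))) = 1 / ((Nat.factorial n : ℕ) : ℂ) by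
    push_cast; simp]
  ring

def chC (a : ℂ) : ℂ⟦X⟧ := PowerSeries.C (R := ℂ) (1/2) * (E a + E (-a))
def shC (a : ℂ) : ℂ⟦X⟧ := PowerSeries.C (R := ℂ) (1/2) * (E a - E (-a))

abbrev B : ℂ⟦X⟧ := bernoulli'PowerSeries ℂ

lemma rescale_X (c : ℂ) : rescale c (X : ℂ⟦X⟧) = PowerSeries.C (R := ℂ) c * X := by
  ext n
  rw [coeff_rescale, coeff_C_mul, coeff_X]
  split_ifs with h <;> simp [h]

lemma resc_bern (c : ℂ) : rescale c B * (E c - 1) = PowerSeries.C (R := ℂ) c * X * E c := by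
  have h := congrArg (rescale c) (bernoulli'PowerSeries_mul_exp_sub_one ℂ)
  rw [map_mul, map_sub, map_one, map_mul, rescale_X] at h
  exact h

def P (a : ℂ) : ℂ⟦X⟧ := rescale (4 * a) B - rescale (2 * a) B - PowerSeries.C (R := ℂ) a * X

lemma E_ne_one {a : ℂ} (ha : a ≠ 0) : E a ≠ 1 := by
  intro h
  have := congrArg (coeff (R := ℂ) 1) h
  rw [coeff_E, coeff_one] at this
  simp [Nat.factorial] at this
  exact ha this

lemma key (a : ℂ) (ha : a ≠ 0) :
    PowerSeries.C (R := ℂ) a * X * shC a = P a * chC a := by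
  have hef : E a * E (-a) = 1 := by rw [E_mul]; simp [E_zero]
  have h2 : E (2 * a) = E a * E a := by rw [E_mul, two_mul]
  have h4 : E (4 * a) = E a ^ 4 := by
    have : (4 : ℂ) * a = (a + a) + (a + a) := by ring
    rw [this, ← E_mul, ← E_mul]; ring
  have hC2 : PowerSeries.C (R := ℂ) (2 * a) = 2 * PowerSeries.C (R := ℂ) a := by
    rw [map_mul, map_ofNat]
  have hC4 : PowerSeries.C (R := ℂ) (4 * a) = 4 * PowerSeries.C (R := ℂ) a := by
    rw [map_mul, map_ofNat]
  have hB2 := resc_bern (2 * a)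
  have hB4 := resc_bern (4 * a)
  rw [h2, hC2] at hB2
  rw [h4, hC4] at hB4
  have hM : (E a * E a - 1) * (E a ^ 4 - 1) ≠ 0 := by
    apply mul_ne_zero
    · rw [← h2]; exact sub_ne_zero_of_ne (E_ne_one (by simpa using ha))
    · rw [← h4]; exact sub_ne_zero_of_ne (E_ne_one (by simpa using ha))
  apply mul_right_cancel₀ hM
  rw [shC, chC, P]
  set e := E a
  set f := E (-a)
  set B2 := rescale (2 * a) B
  set B4 := rescale (4 * a) B
  set c := PowerSeries.C (R := ℂ) a
  set h := PowerSeries.C (R := ℂ) (1/2 : ℂ)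
  calc (c * X * (h * (e - f))) * ((e * e - 1) * (e ^ 4 - 1))
      = ((B4 - B2 - c * X) * (h * (e + f))) * ((e * e - 1) * (e ^ 4 - 1)) := by
        linear_combination (-(h * (e + f) * (e * e - 1))) * hB4 +
          (h * (e + f) * (e ^ 4 - 1)) * hB2 +
          (-(2 * e * (e * e - 1) ^ 2 * c * X * h)) * hef
    _ = _ := by ring

section Deriv

lemma coeff_derivativeFun' (f : ℂ⟦X⟧) (n : ℕ) :
    coeff n (derivativeFun f) = coeff (n + 1) f * (n + 1) := coeff_derivative f n

lemma derivativeFun_C' (r : ℂ) : derivativeFun (PowerSeries.C r) = 0 := derivative_C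

lemma D_E (a : ℂ) : derivativeFun (E a) = PowerSeries.C (R := ℂ) a * E a := by
  ext n
  rw [coeff_derivativeFun', coeff_C_mul, coeff_E, coeff_E, Nat.factorial_succ]
  have h1 : ((Nat.factorial n : ℕ) : ℂ) ≠ 0 := Nat.cast_ne_zero.2 (Nat.factorial_ne_zero n)
  have h2 : ((n : ℂ) + 1) ≠ 0 := Nat.cast_add_one_ne_zero n
  push_cast
  field_simp
  ring

lemma D_chC (a : ℂ) : derivativeFun (chC a) = PowerSeries.C (R := ℂ) a * shC a := by
  rw [chC, derivativeFun_mul, derivativeFun_C', derivativeFun_add, D_E, D_E, shC, map_neg]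
  simp only [smul_eq_mul]
  ring

lemma X_D_chC (a : ℂ) (ha : a ≠ 0) : X * derivativeFun (chC a) = P a * chC a := by
  rw [D_chC, show X * (PowerSeries.C (R := ℂ) a * shC a) = PowerSeries.C (R := ℂ) a * X * shC a by ring,
    key a ha]

lemma ODE {ι : Type*} [DecidableEq ι] (s : Finset ι) (b : ι → ℂ) (hb : ∀ i ∈ s, b i ≠ 0) :
    X * derivativeFun (∏ i ∈ s, chC (b i)) =
      (∑ i ∈ s, P (b i)) * ∏ i ∈ s, chC (b i) := by
  induction s using Finset.induction with
  | empty => simp [derivativeFun_one]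
  | @insert j s' hj ih =>
    rw [Finset.prod_insert hj, Finset.sum_insert hj, derivativeFun_mul]
    have h1 := X_D_chC (b j) (hb j (Finset.mem_insert_self j s'))
    have h2 := ih fun i hi => hb i (Finset.mem_insert_of_mem hi)
    simp only [smul_eq_mul]
    calc X * (chC (b j) * derivativeFun (∏ i ∈ s', chC (b i)) +
          (∏ i ∈ s', chC (b i)) * derivativeFun (chC (b j)))
        = chC (b j) * (X * derivativeFun (∏ i ∈ s', chC (b i))) +
          (∏ i ∈ s', chC (b i)) * (X * derivativeFun (chC (b j))) := by ring
      _ = chC (b j) * ((∑ i ∈ s', P (b i)) * ∏ i ∈ s', chC (b i)) +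
          (∏ i ∈ s', chC (b i)) * (P (b j) * chC (b j)) := by rw [h1, h2]
      _ = _ := by ring

end Deriv

lemma coeff_chC (a : ℂ) (n : ℕ) :
    coeff (R := ℂ) n (chC a) = if Even n then a ^ n / ((Nat.factorial n : ℕ) : ℂ) else 0 := by
  rw [chC, coeff_C_mul, map_add, coeff_E, coeff_E]
  rcases Nat.even_or_odd n with h | h
  · rw [if_pos h, h.neg_pow]; ring
  · rw [if_neg (Nat.not_even_iff_odd.2 h), h.neg_pow]; ring

lemma constantCoeff_chC (a : ℂ) : constantCoeff (R := ℂ) (chC a) = 1 := by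
  rw [← coeff_zero_eq_constantCoeff, coeff_chC]
  simp [Nat.factorial]

lemma coeff_resc_bern (c : ℂ) (n : ℕ) :
    coeff (R := ℂ) n (rescale c B) = c ^ n * ((bernoulli' n : ℂ) / ((Nat.factorial n : ℕ) : ℂ)) := by
  rw [coeff_rescale, B, bernoulli'PowerSeries, coeff_mk]
  congr 1
  rw [show ((bernoulli' n / (Nat.factorial n : ℚ)) : ℚ)
      = (bernoulli' n : ℚ) / (Nat.factorial n : ℚ) from rfl]
  rw [map_div₀]; norm_cast

lemma coeff_P (a : ℂ) (n : ℕ) :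
    coeff (R := ℂ) n (P a) =
      ((4 : ℂ) ^ n - 2 ^ n) * (bernoulli' n : ℂ) / ((Nat.factorial n : ℕ) : ℂ) * a ^ n
        - (if n = 1 then a else 0) := by
  rw [P, map_sub, map_sub, coeff_resc_bern, coeff_resc_bern, coeff_C_mul, coeff_X, mul_pow,
    mul_pow]
  split_ifs <;> ring

lemma sum_pow_root (k : ℕ) (x : ℂ) (hx : x ^ k = 1) (hx1 : x ≠ 1) :
    ∑ i : Fin k, x ^ ((i : ℕ) + 1) = 0 := by
  have hg : (∑ i ∈ Finset.range k, x ^ i) * (x - 1) = 0 := by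
    rw [geom_sum_mul, hx, sub_self]
  have h0 : ∑ i ∈ Finset.range k, x ^ i = 0 :=
    (mul_eq_zero.1 hg).resolve_right (sub_ne_zero_of_ne hx1)
  rw [Fin.sum_univ_eq_sum_range (fun i => x ^ (i + 1))]
  calc ∑ i ∈ Finset.range k, x ^ (i + 1) = x * ∑ i ∈ Finset.range k, x ^ i := by
        rw [Finset.mul_sum]; exact Finset.sum_congr rfl fun i _ => by ring
    _ = 0 := by rw [h0, mul_zero]

lemma coeff_Q (k : ℕ) (w : ℂ) (n : ℕ) :
    coeff (R := ℂ) n (∑ i : Fin k, P (w ^ ((i : ℕ) + 1))) =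
      ((4 : ℂ) ^ n - 2 ^ n) * (bernoulli' n : ℂ) / ((Nat.factorial n : ℕ) : ℂ) *
          (∑ i : Fin k, (w ^ n) ^ ((i : ℕ) + 1))
        - (if n = 1 then (∑ i : Fin k, w ^ ((i : ℕ) + 1)) else 0) := by
  rw [map_sum]
  simp only [coeff_P]
  rw [Finset.sum_sub_distrib]
  congr 1
  · rw [Finset.mul_sum]
    exact Finset.sum_congr rfl fun i _ => by rw [← pow_mul, ← pow_mul, Nat.mul_comm]
  · split_ifs with hn
    · rfl
    · simp

lemma coeff_G (k : ℕ) (hk : 1 ≤ k) (ζ w : ℂ) (hw0 : w ≠ 0) (hw2 : w ^ 2 = ζ)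
    (hζ : IsPrimitiveRoot ζ k) :
    coeff (R := ℂ) (2 * k) (∏ i : Fin k, chC (w ^ ((i : ℕ) + 1))) =
      2 ^ (2 * k - 1) * ((2 : ℂ) ^ (2 * k) - 1) * (bernoulli' (2 * k) : ℂ) /
        ((Nat.factorial (2 * k) : ℕ) : ℂ) := by
  set b : Fin k → ℂ := fun i => w ^ ((i : ℕ) + 1) with hb
  set G : ℂ⟦X⟧ := ∏ i : Fin k, chC (b i) with hG
  set Q : ℂ⟦X⟧ := ∑ i : Fin k, P (b i) with hQdef
  have hODE : X * derivativeFun G = Q * G :=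
    ODE Finset.univ b (fun i _ => pow_ne_zero _ hw0)
  -- vanishing of low coefficients of Q
  have hQlt : ∀ n, n < 2 * k → coeff (R := ℂ) n Q = 0 := by
    intro n hn
    rw [hQdef, coeff_Q]
    by_cases hn1 : n = 1
    · subst hn1
      have hb1 : (bernoulli' 1 : ℂ) = 1 / 2 := by rw [bernoulli'_one]; push_cast; ring
      rw [if_pos rfl, hb1]
      simp [Nat.factorial]
      ring
    · rw [if_neg hn1, sub_zero]
      rcases Nat.even_or_odd n with he | ho
      · rcases Nat.eq_zero_or_pos n with h0 | hpos
        · subst h0; norm_num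
        · obtain ⟨m, hm⟩ := he
          have hm' : n = 2 * m := by omega
          have hmpos : 0 < m := by omega
          have hmk : m < k := by omega
          have hwn : w ^ n = ζ ^ m := by rw [hm', pow_mul, hw2]
          rw [hwn, sum_pow_root k (ζ ^ m) (by rw [← pow_mul, Nat.mul_comm, pow_mul, hζ.pow_eq_one,
            one_pow]) (hζ.pow_ne_one_of_pos_of_lt hmpos.ne' hmk), mul_zero]
      · obtain ⟨m, hm⟩ := id ho
        have : bernoulli' n = 0 := bernoulli'_eq_zero_of_odd ho (by omega)
        rw [this]
        norm_num
  -- the coefficient of Q in degree 2k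
  have hQ2k : coeff (R := ℂ) (2 * k) Q =
      ((4 : ℂ) ^ (2 * k) - 2 ^ (2 * k)) * (bernoulli' (2 * k) : ℂ) /
        ((Nat.factorial (2 * k) : ℕ) : ℂ) * k := by
    rw [hQdef, coeff_Q, if_neg (by omega), sub_zero]
    congr 1
    have hwk : w ^ (2 * k) = 1 := by
      rw [pow_mul, hw2, hζ.pow_eq_one]
    rw [hwk]
    simp
  -- constant coefficient of G is 1
  have hG0 : coeff (R := ℂ) 0 G = 1 := by
    rw [coeff_zero_eq_constantCoeff, hG, map_prod]
    simp [constantCoeff_chC]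
  -- extract coefficient 2k of the ODE
  have hL : coeff (R := ℂ) (2 * k) (X * derivativeFun G) = coeff (R := ℂ) (2 * k) G * (2 * k : ℕ) := by
    have h2k : 2 * k = (2 * k - 1) + 1 := by omega
    rw [h2k, coeff_succ_X_mul, coeff_derivativeFun']
    norm_cast
  have hR : coeff (R := ℂ) (2 * k) (Q * G) = coeff (R := ℂ) (2 * k) Q := by
    rw [coeff_mul]
    rw [Finset.sum_eq_single (2 * k, 0)]
    · rw [hG0, mul_one]
    · intro p hp hne
      rcases Nat.lt_or_ge p.1 (2 * k) with h | h
      · rw [hQlt p.1 h, zero_mul]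
      · exfalso
        apply hne
        have := Finset.HasAntidiagonal.mem_antidiagonal.1 hp
        have h1 : p.1 = 2 * k := by omega
        have h2 : p.2 = 0 := by omega
        rw [← h1, ← h2]
    · intro h
      exfalso
      exact h (Finset.HasAntidiagonal.mem_antidiagonal.2 (by omega))
  have hEq : coeff (R := ℂ) (2 * k) G * (2 * k : ℕ) =
      ((4 : ℂ) ^ (2 * k) - 2 ^ (2 * k)) * (bernoulli' (2 * k) : ℂ) /
        ((Nat.factorial (2 * k) : ℕ) : ℂ) * k := by
    rw [← hL, hODE, hR, hQ2k]
  have hk0 : ((k : ℂ)) ≠ 0 := Nat.cast_ne_zero.2 (by omega)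
  have hfac : ((Nat.factorial (2 * k) : ℕ) : ℂ) ≠ 0 :=
    Nat.cast_ne_zero.2 (Nat.factorial_ne_zero _)
  have h4 : (4 : ℂ) ^ (2 * k) = 2 ^ (2 * k) * 2 ^ (2 * k) := by
    rw [show (4 : ℂ) = 2 * 2 by norm_num, mul_pow]
  have h2p : (2 : ℂ) ^ (2 * k) = 2 * 2 ^ (2 * k - 1) := by
    rw [← pow_succ']
    congr 1
    omega
  push_cast at hEq
  field_simp at hEq
  have h2k0 : (2 * (k : ℂ)) ≠ 0 := by simp [hk0]
  have key2 : coeff (R := ℂ) (2 * k) G * ((Nat.factorial (2 * k) : ℕ) : ℂ) * (2 * (k : ℂ)) =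
      2 ^ (2 * k - 1) * ((2 : ℂ) ^ (2 * k) - 1) * (bernoulli' (2 * k) : ℂ) * (2 * (k : ℂ)) := by
    linear_combination (k : ℂ) * hEq + ((bernoulli' (2 * k) : ℂ) * k) * h4 +
      (((2 : ℂ) ^ (2 * k) - 1) * (bernoulli' (2 * k) : ℂ) * k) * h2p
  have hcan := mul_right_cancel₀ h2k0 key2
  rw [eq_div_iff hfac]
  exact hcan

lemma coeff_G_sum (k : ℕ) (w : ℂ) :
    coeff (R := ℂ) (2 * k) (∏ i : Fin k, chC (w ^ ((i : ℕ) + 1))) =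
      ∑ f ∈ Finset.Nat.antidiagonalTuple k k,
        (∏ i : Fin k, (((Nat.factorial (2 * f i) : ℕ) : ℂ))⁻¹) *
          (w ^ 2) ^ (∑ i : Fin k, ((i : ℕ) + 1) * f i) := by
  classical
  rw [PowerSeries.coeff_prod]
  rw [← Finset.sum_filter_of_ne (p := fun l : Fin k →₀ ℕ => ∀ i, Even (l i))
    (fun l _ hne i => by
      by_contra hodd
      exact hne (Finset.prod_eq_zero (Finset.mem_univ i)
        (by rw [coeff_chC, if_neg hodd])))]
  refine Finset.sum_bij' (fun l _ => fun i => l i / 2)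
    (fun f _ => Finsupp.equivFunOnFinite.symm (fun i => 2 * f i)) ?_ ?_ ?_ ?_ ?_
  · -- maps into antidiagonalTuple
    intro l hl
    rw [Finset.mem_filter, Finset.mem_finsuppAntidiag] at hl
    obtain ⟨⟨hsum, -⟩, heven⟩ := hl
    rw [Finset.Nat.mem_antidiagonalTuple]
    have h2s : (2 : ℕ) * ∑ i : Fin k, l i / 2 = 2 * k := by
      rw [Finset.mul_sum]
      rw [← hsum]
      exact Finset.sum_congr rfl fun i _ => (Nat.two_mul_div_two_of_even (heven i))
    show ∑ i : Fin k, l i / 2 = k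
    omega
  · -- maps back into the filtered set
    intro f hf
    rw [Finset.Nat.mem_antidiagonalTuple] at hf
    rw [Finset.mem_filter, Finset.mem_finsuppAntidiag]
    refine ⟨⟨?_, Finset.subset_univ _⟩, fun i => ?_⟩
    · simp only [Finsupp.coe_equivFunOnFinite_symm]
      rw [← Finset.mul_sum, hf]
    · simp only [Finsupp.coe_equivFunOnFinite_symm]
      exact ⟨f i, by ring⟩
  · intro l hl
    rw [Finset.mem_filter] at hl
    ext i
    simp only [Finsupp.coe_equivFunOnFinite_symm]
    exact Nat.two_mul_div_two_of_even (hl.2 i)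
  · intro f hf
    ext i
    simp only [Finsupp.coe_equivFunOnFinite_symm]
    omega
  · -- values agree
    intro l hl
    rw [Finset.mem_filter] at hl
    obtain ⟨-, heven⟩ := hl
    have hval : ∀ i : Fin k, coeff (R := ℂ) (l i) (chC (w ^ ((i : ℕ) + 1))) =
        (w ^ 2) ^ (((i : ℕ) + 1) * (l i / 2)) * (((Nat.factorial (2 * (l i / 2)) : ℕ) : ℂ))⁻¹ := by
      intro i
      obtain ⟨m, hm⟩ := heven i
      have hdiv : l i / 2 = m := by omega
      have hm2 : l i = 2 * m := by omega
      rw [coeff_chC, if_pos (heven i), hdiv, hm2, div_eq_mul_inv, ← pow_mul, ← pow_mul,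
        show ((i : ℕ) + 1) * (2 * m) = 2 * (((i : ℕ) + 1) * m) from by ring]
    rw [Finset.prod_congr rfl fun i _ => hval i]
    rw [Finset.prod_mul_distrib, Finset.prod_pow_eq_pow_sum]
    ring

end BernAux


/-- **Formula (4.5)**: for every `k ≥ 1`,
`B_{2k} = 1/(2^{2k-1}(2^{2k}-1)) Σ_{n_1+⋯+n_k=k} multinomial(2k; 2n_1,…,2n_k)
ζ_k^{Σ_l l n_l}`, where `ζ_k = e^{2πi/k}` and `B` is the Bernoulli number
(convention `t e^t/(e^t-1)`, which agrees with all conventions in even degree). -/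
theorem bernoulli_multinomial_root_of_unity_sum' (k : ℕ) (hk : 1 ≤ k) :
    (bernoulli' (2 * k) : ℂ) =
      1 / (2 ^ (2 * k - 1) * ((2 : ℂ) ^ (2 * k) - 1)) *
        ∑ f ∈ Finset.Nat.antidiagonalTuple k k,
          (Nat.multinomial Finset.univ (fun i => 2 * f i) : ℂ) *
            Complex.exp (2 * Real.pi * Complex.I / k) ^ (∑ i : Fin k, ((i : ℕ) + 1) * f i) := by
  classical
  set ζ : ℂ := Complex.exp (2 * Real.pi * Complex.I / k) with hζdef
  set w : ℂ := Complex.exp (Real.pi * Complex.I / k) with hwdef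
  have hw2 : w ^ 2 = ζ := by
    rw [hwdef, hζdef, ← Complex.exp_nat_mul]
    congr 1
    push_cast
    ring
  have hζprim : IsPrimitiveRoot ζ k := Complex.isPrimitiveRoot_exp k (by omega)
  have hw0 : w ≠ 0 := Complex.exp_ne_zero _
  have hG := BernAux.coeff_G k hk ζ w hw0 hw2 hζprim
  have hGsum := BernAux.coeff_G_sum k w
  rw [hw2] at hGsum
  have hfac : ((Nat.factorial (2 * k) : ℕ) : ℂ) ≠ 0 :=
    Nat.cast_ne_zero.2 (Nat.factorial_ne_zero _)
  have hmult : ∀ f ∈ Finset.Nat.antidiagonalTuple k k,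
      (Nat.multinomial Finset.univ (fun i => 2 * f i) : ℂ) *
          ζ ^ (∑ i : Fin k, ((i : ℕ) + 1) * f i) =
        ((Nat.factorial (2 * k) : ℕ) : ℂ) *
          ((∏ i : Fin k, (((Nat.factorial (2 * f i) : ℕ) : ℂ))⁻¹) *
            ζ ^ (∑ i : Fin k, ((i : ℕ) + 1) * f i)) := by
    intro f hf
    have hsum : ∑ i : Fin k, 2 * f i = 2 * k := by
      rw [← Finset.mul_sum, Finset.Nat.mem_antidiagonalTuple.1 hf]
    have hspec := Nat.multinomial_spec Finset.univ (fun i => 2 * f i)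
    rw [hsum] at hspec
    have hcast : ((∏ i : Fin k, Nat.factorial (2 * f i) : ℕ) : ℂ) *
        (Nat.multinomial Finset.univ (fun i => 2 * f i) : ℂ) =
        ((Nat.factorial (2 * k) : ℕ) : ℂ) := by exact_mod_cast congrArg Nat.cast hspec
    have hprod0 : ((∏ i : Fin k, Nat.factorial (2 * f i) : ℕ) : ℂ) ≠ 0 :=
      Nat.cast_ne_zero.2 (Finset.prod_ne_zero_iff.2 fun i _ => Nat.factorial_ne_zero _)
    have hmul : (Nat.multinomial Finset.univ (fun i => 2 * f i) : ℂ) =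
        ((Nat.factorial (2 * k) : ℕ) : ℂ) *
          (∏ i : Fin k, (((Nat.factorial (2 * f i) : ℕ) : ℂ))⁻¹) := by
      have hinv : ∏ i : Fin k, (((Nat.factorial (2 * f i) : ℕ) : ℂ))⁻¹ =
          (∏ i : Fin k, (((Nat.factorial (2 * f i) : ℕ) : ℂ)))⁻¹ := by
        simp
      rw [hinv, ← Nat.cast_prod]
      rw [eq_mul_inv_iff_mul_eq₀ hprod0]
      linear_combination hcast
    rw [hmul]
    ring
  rw [Finset.sum_congr rfl hmult, ← Finset.mul_sum, ← hGsum, hG]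
  have hne1 : ((2 : ℂ) ^ (2 * k) - 1) ≠ 0 := by
    rw [sub_ne_zero]
    intro h
    have h2 : ((2 ^ (2 * k) : ℕ) : ℂ) = ((1 : ℕ) : ℂ) := by push_cast; rw [h]
    have := Nat.cast_injective h2
    have h1 : 1 < 2 ^ (2 * k) := Nat.one_lt_two_pow (by omega)
    omega
  have hc : ((2 : ℂ) ^ (2 * k - 1) * ((2 : ℂ) ^ (2 * k) - 1)) ≠ 0 :=
    mul_ne_zero (pow_ne_zero _ two_ne_zero) hne1
  field_simp
end
end

section
/- For every integer d ≥ 1, the Euler number E_{2d} satisfies E_{2d} = 2^{2d} (2d)! · Σ_{μ ⊢ d} (1/z_μ) · ((−1)^{ℓ(μ)} / 2^{ℓ(μ)}) · ( ∏_{j=1}^{ℓ(μ)} (2^{2μ_j} − 1) ) · ∏_{j=1}^{ℓ(μ)} B_{2μ_j}/(2μ_j)!, where the sum is over all partitions μ of d. -/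
open Finset

noncomputable section

namespace EulerAux

open PowerSeries



/-- weighted contribution of a multiset of parts -/
def mw (wt : ℕ → ℚ) (s : Multiset ℕ) : ℚ :=
  (s.map wt).prod / ∏ i ∈ s.toFinset, ((s.count i).factorial : ℚ)

/-- partition-sum -/
def P (wt : ℕ → ℚ) (d : ℕ) : ℚ := ∑ μ : Nat.Partition d, mw wt μ.parts

lemma prod_count_cons (s : Multiset ℕ) (k : ℕ) :
    ∏ i ∈ (k ::ₘ s).toFinset, ((k ::ₘ s).count i).factorial
      = (s.count k + 1) * ∏ i ∈ s.toFinset, (s.count i).factorial := by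
  rw [Multiset.toFinset_cons]
  by_cases h : k ∈ s.toFinset
  · rw [Finset.insert_eq_self.mpr h, ← Finset.mul_prod_erase _ _ h,
      ← Finset.mul_prod_erase _ (fun i => (s.count i).factorial) h,
      Multiset.count_cons_self, Nat.factorial_succ, mul_assoc]
    have hpr : ∏ x ∈ s.toFinset.erase k, ((k ::ₘ s).count x).factorial
        = ∏ x ∈ s.toFinset.erase k, (s.count x).factorial :=
      Finset.prod_congr rfl fun i hi => by
        rw [Multiset.count_cons_of_ne (Finset.ne_of_mem_erase hi)]
    rw [hpr]
  · rw [Finset.prod_insert h, Multiset.count_cons_self,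
      Multiset.count_eq_zero_of_notMem (fun hc => h (Multiset.mem_toFinset.mpr hc))]
    simp only [Nat.factorial_one, zero_add, one_mul]
    apply Finset.prod_congr rfl
    intro i hi
    rw [Multiset.count_cons_of_ne]
    rintro rfl; exact h hi

lemma mw_cons (wt : ℕ → ℚ) (s : Multiset ℕ) (k : ℕ) :
    ((s.count k : ℚ) + 1) * mw wt (k ::ₘ s) = wt k * mw wt s := by
  unfold mw
  have hD : (∏ i ∈ s.toFinset, ((s.count i).factorial : ℚ)) ≠ 0 := by
    apply Finset.prod_ne_zero_iff.mpr
    intro i _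
    exact_mod_cast (Nat.factorial_pos _).ne'
  have h1 : ((s.count k : ℚ) + 1) ≠ 0 := by positivity
  rw [Multiset.map_cons, Multiset.prod_cons]
  have hc : (∏ i ∈ (k ::ₘ s).toFinset, (((k ::ₘ s).count i).factorial : ℚ))
      = ((s.count k : ℚ) + 1) * ∏ i ∈ s.toFinset, ((s.count i).factorial : ℚ) := by
    exact_mod_cast congrArg (fun n : ℕ => (n : ℚ)) (prod_count_cons s k)
  rw [hc]
  field_simp

lemma sum_count_mul_mw (wt : ℕ → ℚ) {d k : ℕ} (hk1 : 1 ≤ k) (hkd : k ≤ d) :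
    ∑ μ : Nat.Partition d, (μ.parts.count k : ℚ) * mw wt μ.parts
      = wt k * ∑ ν : Nat.Partition (d - k), mw wt ν.parts := by
  rw [Finset.mul_sum]
  rw [← Finset.sum_filter_of_ne (p := fun μ : Nat.Partition d => k ∈ μ.parts)
    (fun μ _ hne => by
      by_contra hk
      exact hne (by rw [Multiset.count_eq_zero_of_notMem hk]; simp))]
  refine Finset.sum_bij'
    (fun (μ : Nat.Partition d) (hμ : μ ∈ Finset.univ.filter fun μ => k ∈ μ.parts) =>
      (⟨μ.parts.erase k,
        fun hi => μ.parts_pos (Multiset.mem_of_mem_erase hi), ?_⟩ : Nat.Partition (d - k)))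
    (fun (ν : Nat.Partition (d - k)) _ =>
      (⟨k ::ₘ ν.parts, ?_, ?_⟩ : Nat.Partition d))
    ?_ ?_ ?_ ?_ ?_
  · -- sum of erase
    have hμ' := (Finset.mem_filter.mp hμ).2
    have hsum : (k ::ₘ μ.parts.erase k).sum = d := by
      rw [Multiset.cons_erase hμ', μ.parts_sum]
    rw [Multiset.sum_cons] at hsum
    omega
  · -- positivity for cons
    intro i hi
    rcases Multiset.mem_cons.mp hi with rfl | hi
    · omega
    · exact ν.parts_pos hi
  · rw [Multiset.sum_cons, ν.parts_sum]; omega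
  · intro μ hμ; exact Finset.mem_univ _
  · intro ν hν
    simp only [Finset.mem_filter, Finset.mem_univ, true_and]
    exact Multiset.mem_cons_self _ _
  · intro μ hμ
    have hμ' := (Finset.mem_filter.mp hμ).2
    ext1
    exact Multiset.cons_erase hμ'
  · intro ν hν
    ext1
    exact Multiset.erase_cons_head _ _
  · intro μ hμ
    have hμ' := (Finset.mem_filter.mp hμ).2
    -- per-term equality
    have key := mw_cons wt (μ.parts.erase k) k
    have hcount : μ.parts.count k = (μ.parts.erase k).count k + 1 := by
      conv_lhs => rw [← Multiset.cons_erase hμ']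
      rw [Multiset.count_cons_self]
    have hparts : k ::ₘ μ.parts.erase k = μ.parts := Multiset.cons_erase hμ'
    rw [hcount]
    push_cast
    rw [← hparts]
    simpa using key

lemma P_rec (wt : ℕ → ℚ) (d : ℕ) :
    (d : ℚ) * P wt d = ∑ k ∈ Icc 1 d, (k : ℚ) * wt k * P wt (d - k) := by
  unfold P
  rw [Finset.mul_sum]
  have hμ : ∀ μ : Nat.Partition d,
      (d : ℚ) = ∑ k ∈ Icc 1 d, (k : ℚ) * (μ.parts.count k : ℚ) := by
    intro μ
    have h1 : ∑ i ∈ μ.parts.toFinset, μ.parts.count i • i = d := by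
      have h0 : (μ.parts.map id).sum = ∑ m ∈ μ.parts.toFinset, μ.parts.count m • id m :=
        Finset.sum_multiset_map_count μ.parts id
      simp only [id, Multiset.map_id', μ.parts_sum] at h0
      exact h0.symm
    have hsub : μ.parts.toFinset ⊆ Icc 1 d := by
      intro i hi
      rw [Multiset.mem_toFinset] at hi
      have h2 := μ.parts_pos hi
      have h3 : i ≤ μ.parts.sum := Multiset.le_sum_of_mem hi
      rw [μ.parts_sum] at h3
      exact Finset.mem_Icc.mpr ⟨h2, h3⟩
    have h4 : ∑ i ∈ Icc 1 d, μ.parts.count i • i = d := by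
      rw [← Finset.sum_subset hsub (fun i _ hi => by
        rw [Multiset.count_eq_zero_of_notMem (fun hc => hi (Multiset.mem_toFinset.mpr hc))]
        simp)]
      exact h1
    calc (d : ℚ) = ((∑ i ∈ Icc 1 d, μ.parts.count i • i : ℕ) : ℚ) := by rw [h4]
      _ = ∑ k ∈ Icc 1 d, (k : ℚ) * (μ.parts.count k : ℚ) := by
          push_cast [smul_eq_mul]
          apply Finset.sum_congr rfl
          intro i _
          ring
  calc ∑ μ : Nat.Partition d, (d : ℚ) * mw wt μ.parts
      = ∑ μ : Nat.Partition d, ∑ k ∈ Icc 1 d,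
          (k : ℚ) * (μ.parts.count k : ℚ) * mw wt μ.parts := by
        apply Finset.sum_congr rfl
        intro μ _
        rw [← Finset.sum_mul, ← hμ μ]
    _ = ∑ k ∈ Icc 1 d, ∑ μ : Nat.Partition d,
          (k : ℚ) * ((μ.parts.count k : ℚ) * mw wt μ.parts) := by
        rw [Finset.sum_comm]
        simp_rw [mul_assoc]
    _ = ∑ k ∈ Icc 1 d, (k : ℚ) * wt k * P wt (d - k) := by
        apply Finset.sum_congr rfl
        intro k hk
        rw [← Finset.mul_sum]
        rw [sum_count_mul_mw wt (Finset.mem_Icc.mp hk).1 (Finset.mem_Icc.mp hk).2]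
        unfold P
        ring




def Cser : ℚ⟦X⟧ := PowerSeries.mk fun m => (1 + (-1 : ℚ) ^ m) / m.factorial

def Shser : ℚ⟦X⟧ := PowerSeries.mk fun m => (1 - (-1 : ℚ) ^ m) / m.factorial

def TB : ℚ⟦X⟧ := PowerSeries.mk fun m =>
  if Odd m then 2 ^ (m + 1) * (2 ^ (m + 1) - 1) * bernoulli' (m + 1) / (m + 1).factorial else 0

def Sser : ℚ⟦X⟧ := 2 * Cser⁻¹

lemma Cser_eq : Cser = exp ℚ + rescale (-1) (exp ℚ) := by
  ext n
  simp only [Cser, coeff_mk, map_add, coeff_rescale, coeff_exp, Algebra.algebraMap_self,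
    RingHom.id_apply]
  ring

lemma Shser_eq : Shser = exp ℚ - rescale (-1) (exp ℚ) := by
  ext n
  simp only [Shser, coeff_mk, map_sub, coeff_rescale, coeff_exp, Algebra.algebraMap_self,
    RingHom.id_apply]
  ring

lemma constCser : constantCoeff Cser = 2 := by
  have : constantCoeff Cser = coeff 0 Cser := by rw [coeff_zero_eq_constantCoeff]
  rw [this]
  simp [Cser]
  norm_num

lemma Cser_ne_zero : Cser ≠ 0 := by
  intro h
  have := constCser
  rw [h] at this
  simp at this

lemma hB2 : rescale (2 : ℚ) (bernoulliPowerSeries ℚ) * (rescale (2 : ℚ) (exp ℚ) - 1)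
    = PowerSeries.C (R := ℚ) 2 * X := by
  have h := congrArg (rescale (2 : ℚ)) (bernoulliPowerSeries_mul_exp_sub_one ℚ)
  simpa only [map_mul, map_sub, map_one, rescale_X] using h

lemma hB4 : rescale (4 : ℚ) (bernoulliPowerSeries ℚ) * (rescale (4 : ℚ) (exp ℚ) - 1)
    = PowerSeries.C (R := ℚ) 4 * X := by
  have h := congrArg (rescale (4 : ℚ)) (bernoulliPowerSeries_mul_exp_sub_one ℚ)
  simpa only [map_mul, map_sub, map_one, rescale_X] using h

lemma bernoulli_odd_zero {n : ℕ} (h : Odd n) (h1 : 1 < n) : bernoulli n = 0 := by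
  have h2 := bernoulli'_eq_zero_of_odd h h1
  rw [bernoulli'_eq_bernoulli] at h2
  rcases Nat.odd_iff.mp h with hm
  have : ((-1 : ℚ)) ^ n = -1 := Odd.neg_one_pow h
  rw [this] at h2
  linarith

lemma TB_mul_X : TB * X = rescale (4 : ℚ) (bernoulliPowerSeries ℚ)
    - rescale (2 : ℚ) (bernoulliPowerSeries ℚ) + X := by
  ext n
  cases n with
  | zero =>
    simp only [coeff_zero_mul_X, map_add, map_sub, ← coeff_zero_eq_constantCoeff,
      coeff_rescale, pow_zero, one_mul, bernoulliPowerSeries, coeff_mk]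
    norm_num
  | succ n =>
    rw [coeff_succ_mul_X]
    simp only [TB, coeff_mk, map_add, map_sub, coeff_rescale, bernoulliPowerSeries, coeff_mk,
      Algebra.algebraMap_self, RingHom.id_apply, coeff_X]
    rcases Nat.even_or_odd n with he | ho
    · rw [if_neg (by simpa [Nat.even_iff, Nat.odd_iff] using he)]
      rcases Nat.eq_zero_or_pos n with rfl | hn
      · norm_num [bernoulli_one]
      · have hodd : Odd (n + 1) := by rcases he with ⟨m, rfl⟩; exact ⟨m, by ring⟩
        rw [bernoulli_odd_zero hodd (by omega), if_neg (by omega)]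
        ring
    · rw [if_pos ho]
      have hne : n + 1 ≠ 1 := by rcases ho with ⟨m, rfl⟩; omega
      rw [← bernoulli_eq_bernoulli'_of_ne_one hne, if_neg (by omega)]
      have h4 : (4 : ℚ) ^ (n + 1) = 2 ^ (n + 1) * 2 ^ (n + 1) := by
        rw [← mul_pow]; norm_num
      rw [h4]
      ring

lemma rescale_two_exp : rescale (2 : ℚ) (exp ℚ) = exp ℚ ^ 2 := by
  rw [show (2 : ℚ) = ((2 : ℕ) : ℚ) by norm_num]
  exact (exp_pow_eq_rescale_exp 2).symm

lemma rescale_four_exp : rescale (4 : ℚ) (exp ℚ) = exp ℚ ^ 4 := by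
  rw [show (4 : ℚ) = ((4 : ℕ) : ℚ) by norm_num]
  exact (exp_pow_eq_rescale_exp 4).symm

lemma TB_tanh : TB * (rescale (2 : ℚ) (exp ℚ) ^ 2 - 1)
    = (rescale (2 : ℚ) (exp ℚ) - 1) ^ 2 := by
  set E2 := rescale (2 : ℚ) (exp ℚ) with hE2def
  have hE4 : rescale (4 : ℚ) (exp ℚ) = E2 ^ 2 := by
    rw [hE2def, rescale_two_exp, rescale_four_exp, ← pow_mul]
  have key : (TB * (E2 ^ 2 - 1)) * X = ((E2 - 1) ^ 2) * X := by
    have hfact : E2 ^ 2 - 1 = (E2 - 1) * (E2 + 1) := by ring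
    calc (TB * (E2 ^ 2 - 1)) * X = (TB * X) * (E2 ^ 2 - 1) := by ring
      _ = (rescale (4 : ℚ) (bernoulliPowerSeries ℚ)
            - rescale (2 : ℚ) (bernoulliPowerSeries ℚ) + X) * (E2 ^ 2 - 1) := by rw [TB_mul_X]
      _ = rescale (4 : ℚ) (bernoulliPowerSeries ℚ) * (rescale (4 : ℚ) (exp ℚ) - 1)
            - (rescale (2 : ℚ) (bernoulliPowerSeries ℚ) * (E2 - 1)) * (E2 + 1)
            + X * (E2 ^ 2 - 1) := by rw [hE4, hfact]; ring
      _ = PowerSeries.C (R := ℚ) 4 * X - (PowerSeries.C (R := ℚ) 2 * X) * (E2 + 1) + X * (E2 ^ 2 - 1) := by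
            rw [hB4, hB2]
      _ = ((E2 - 1) ^ 2) * X := by
            have h2 : (PowerSeries.C (R := ℚ) 2 : ℚ⟦X⟧) = 2 := by simp [map_ofNat]
            have h4 : (PowerSeries.C (R := ℚ) 4 : ℚ⟦X⟧) = 4 := by simp [map_ofNat]
            rw [h2, h4]; ring
  exact mul_right_cancel₀ X_ne_zero key

lemma TB_mul_Cser : TB * Cser = Shser := by
  have hmul : exp ℚ * rescale (-1 : ℚ) (exp ℚ) = 1 := by
    have := exp_mul_exp_neg_eq_one (A := ℚ)
    simpa [evalNegHom] using this
  set E := exp ℚ with hEdef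
  set En := rescale (-1 : ℚ) E with hEn
  have hE2 : rescale (2 : ℚ) E = E ^ 2 := rescale_two_exp
  have hne : E ^ 2 - 1 ≠ 0 := by
    intro h
    have h1 : coeff 1 (E ^ 2 - 1) = 0 := by rw [h]; simp
    rw [← hE2] at h1
    have h2 : coeff 1 (rescale (2 : ℚ) E - 1) = 2 := by
      rw [map_sub, coeff_rescale, hEdef, coeff_exp]
      norm_num [coeff_one]
    rw [h1] at h2
    norm_num at h2
  have step1 : TB * (E ^ 2 + 1) = E ^ 2 - 1 := by
    have h := TB_tanh
    rw [hE2] at h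
    have hfact : (E ^ 2) ^ 2 - 1 = (E ^ 2 - 1) * (E ^ 2 + 1) := by ring
    rw [hfact] at h
    have : (TB * (E ^ 2 + 1)) * (E ^ 2 - 1) = (E ^ 2 - 1) * (E ^ 2 - 1) := by
      calc (TB * (E ^ 2 + 1)) * (E ^ 2 - 1) = TB * ((E ^ 2 - 1) * (E ^ 2 + 1)) := by ring
        _ = (E ^ 2 - 1) ^ 2 := h
        _ = (E ^ 2 - 1) * (E ^ 2 - 1) := by ring
    exact mul_right_cancel₀ hne this
  have step2 : TB * (E + En) = E - En := by
    have h := congrArg (· * En) step1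
    calc TB * (E + En) = TB * (E ^ 2 * En + 1 * En) := by
          rw [show E ^ 2 * En = E * (E * En) by ring, hmul, one_mul, mul_one]
      _ = (TB * (E ^ 2 + 1)) * En := by ring
      _ = (E ^ 2 - 1) * En := by rw [step1]
      _ = E * (E * En) - En := by ring
      _ = E - En := by rw [hmul]; ring
  rw [Cser_eq, Shser_eq]
  exact step2

lemma SC : Sser * Cser = 2 := by
  rw [Sser, mul_assoc, PowerSeries.inv_mul_cancel _ (by rw [constCser]; norm_num), mul_one]

lemma dC : Cser.derivativeFun = Shser := by
  ext n
  rw [show ∀ f : ℚ⟦X⟧, f.derivativeFun = derivative ℚ f from fun _ => rfl, coeff_derivative]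
  simp only [Cser, Shser, coeff_mk]
  have hfac : ((n + 1).factorial : ℚ) = (n + 1) * n.factorial := by
    rw [Nat.factorial_succ]; push_cast; ring
  have hne : (n.factorial : ℚ) ≠ 0 := by exact_mod_cast (Nat.factorial_pos n).ne'
  have hn1 : ((n : ℚ) + 1) ≠ 0 := by positivity
  rw [hfac]
  field_simp
  ring

lemma dS : Sser.derivativeFun = -(Sser * TB) := by
  have h0 : derivativeFun (Sser * Cser) = 0 := by
    rw [SC]
    have : (2 : ℚ⟦X⟧) = PowerSeries.C (R := ℚ) 2 := by simp [map_ofNat]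
    rw [this, show ∀ f : ℚ⟦X⟧, f.derivativeFun = derivative ℚ f from fun _ => rfl, derivative_C]
  rw [derivativeFun_mul, dC] at h0
  have key : Sser.derivativeFun * Cser = (-(Sser * TB)) * Cser := by
    have hTBC := TB_mul_Cser
    have hsmul : Sser • Shser + Cser • Sser.derivativeFun = 0 := h0
    rw [smul_eq_mul, smul_eq_mul] at hsmul
    linear_combination hsmul + Sser * hTBC
  exact mul_right_cancel₀ Cser_ne_zero key

lemma sum_range_even (d : ℕ) (h : ℕ → ℚ) (hodd : ∀ j, Odd j → h j = 0) :
    ∑ k ∈ range (2 * d), h k = ∑ j ∈ range d, h (2 * j) := by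
  induction d with
  | zero => simp
  | succ n ih =>
    have l1 : ∑ k ∈ range (2 * n + 1 + 1), h k = ∑ k ∈ range (2 * n + 1), h k + h (2 * n + 1) :=
      Finset.sum_range_succ _ _
    have l2 : ∑ k ∈ range (2 * n + 1), h k = ∑ k ∈ range (2 * n), h k + h (2 * n) :=
      Finset.sum_range_succ _ _
    have l3 : ∑ j ∈ range (n + 1), h (2 * j) = ∑ j ∈ range n, h (2 * j) + h (2 * n) :=
      Finset.sum_range_succ _ _
    rw [show 2 * (n + 1) = 2 * n + 1 + 1 by ring, l1, l2, l3, ih, hodd (2 * n + 1) ⟨n, by ring⟩, add_zero]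

lemma coeff_TB_odd (k : ℕ) (hk : 1 ≤ k) :
    coeff (2 * k - 1) TB
      = 2 ^ (2 * k) * (2 ^ (2 * k) - 1) * bernoulli' (2 * k) / (2 * k).factorial := by
  have h1 : 2 * k - 1 + 1 = 2 * k := by omega
  simp only [TB, coeff_mk]
  rw [if_pos ⟨k - 1, by omega⟩, h1]

lemma e_rec (d : ℕ) (hd : 1 ≤ d) :
    (2 * d : ℚ) * coeff (2 * d) Sser
      = ∑ k ∈ Icc 1 d, (-(coeff (2 * k - 1) TB)) * coeff (2 * (d - k)) Sser := by
  have h := congrArg (coeff (2 * d - 1)) dS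
  rw [show ∀ f : ℚ⟦X⟧, f.derivativeFun = derivative ℚ f from fun _ => rfl, coeff_derivative] at h
  have h1 : 2 * d - 1 + 1 = 2 * d := by omega
  rw [h1] at h
  have hlhs : coeff (2 * d) Sser * ((2 * d - 1 : ℕ) + 1 : ℚ)
      = (2 * d : ℚ) * coeff (2 * d) Sser := by
    have : ((2 * d - 1 : ℕ) : ℚ) + 1 = (2 * d : ℚ) := by
      have : (2 * d - 1 : ℕ) + 1 = 2 * d := by omega
      exact_mod_cast congrArg (fun n : ℕ => (n : ℚ)) this
    rw [this]; ring
  rw [hlhs] at h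
  rw [h]
  rw [map_neg, coeff_mul, Finset.Nat.sum_antidiagonal_eq_sum_range_succ_mk]
  dsimp only
  have h1' : (2 * d - 1).succ = 2 * d := by omega
  rw [h1']
  have heven := sum_range_even d (fun k => coeff k Sser * coeff (2 * d - 1 - k) TB)
    (fun j hj => by
      have : ¬ Odd (2 * d - 1 - j) := by
        rcases hj with ⟨m, rfl⟩
        rintro ⟨l, hl⟩
        omega
      simp only [TB, coeff_mk, if_neg this, mul_zero])
  rw [heven]
  rw [← Finset.sum_neg_distrib]
  apply Finset.sum_nbij' (i := fun j => d - j) (j := fun k => d - k)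
  · intro a ha
    rw [Finset.mem_range] at ha
    rw [Finset.mem_Icc]
    omega
  · intro a ha
    rw [Finset.mem_Icc] at ha
    rw [Finset.mem_range]
    omega
  · intro a ha
    rw [Finset.mem_range] at ha
    omega
  · intro a ha
    rw [Finset.mem_Icc] at ha
    omega
  · intro a ha
    rw [Finset.mem_range] at ha
    have h2 : 2 * d - 1 - 2 * a = 2 * (d - a) - 1 := by omega
    have h3 : 2 * a = 2 * (d - (d - a)) := by omega
    rw [h2, h3]
    ring



def w (k : ℕ) : ℚ :=
  -(2 ^ (2 * k) * (2 ^ (2 * k) - 1) * bernoulli' (2 * k)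
    / (((2 * k : ℕ) : ℚ) * ((2 * k).factorial : ℚ)))

lemma w_apply (p : ℕ) :
    w p = ((-(1 : ℚ) / 2) * ((p : ℚ))⁻¹) * ((2 : ℚ) ^ (2 * p)) * ((2 : ℚ) ^ (2 * p) - 1)
      * (bernoulli' (2 * p) / ((2 * p).factorial : ℚ)) := by
  rw [w]
  push_cast
  simp only [div_eq_mul_inv, mul_inv]
  ring

lemma rec_unique (wt : ℕ → ℚ) (f g : ℕ → ℚ) (h0 : f 0 = g 0)
    (hf : ∀ d : ℕ, 1 ≤ d → (d : ℚ) * f d = ∑ k ∈ Icc 1 d, (k : ℚ) * wt k * f (d - k))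
    (hg : ∀ d : ℕ, 1 ≤ d → (d : ℚ) * g d = ∑ k ∈ Icc 1 d, (k : ℚ) * wt k * g (d - k)) :
    ∀ d, f d = g d := by
  intro d
  induction d using Nat.strong_induction_on with
  | _ d ih =>
    rcases Nat.eq_zero_or_pos d with rfl | hd
    · exact h0
    · have hsum : ∑ k ∈ Icc 1 d, (k : ℚ) * wt k * f (d - k)
          = ∑ k ∈ Icc 1 d, (k : ℚ) * wt k * g (d - k) :=
        Finset.sum_congr rfl fun k hk => by
          rw [ih (d - k) (by rw [Finset.mem_Icc] at hk; omega)]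
      have hmul : (d : ℚ) * f d = (d : ℚ) * g d := by rw [hf d hd, hg d hd, hsum]
      exact mul_left_cancel₀ (Nat.cast_ne_zero.mpr hd.ne') hmul

lemma e_rec_w (d : ℕ) (hd : 1 ≤ d) :
    (d : ℚ) * coeff (2 * d) Sser
      = ∑ k ∈ Icc 1 d, (k : ℚ) * w k * coeff (2 * (d - k)) Sser := by
  have h := e_rec d hd
  have hterm : ∀ k ∈ Icc 1 d, (k : ℚ) * w k * coeff (2 * (d - k)) Sser
      = (-(coeff (2 * k - 1) TB) * coeff (2 * (d - k)) Sser) / 2 := by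
    intro k hk
    rw [Finset.mem_Icc] at hk
    rw [coeff_TB_odd k hk.1, w]
    have hk0 : (k : ℚ) ≠ 0 := Nat.cast_ne_zero.mpr (by omega)
    have hfne : ((2 * k).factorial : ℚ) ≠ 0 := Nat.cast_ne_zero.mpr (Nat.factorial_pos _).ne'
    push_cast
    field_simp
  rw [Finset.sum_congr rfl hterm, ← Finset.sum_div, ← h]
  push_cast
  ring

lemma e_zero : coeff (2 * 0) Sser = 1 := by
  rw [show 2 * 0 = 0 from rfl, coeff_zero_eq_constantCoeff, Sser, map_mul,
    PowerSeries.constantCoeff_inv, constCser]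
  norm_num [map_ofNat]

lemma parts_zero (μ : Nat.Partition 0) : μ.parts = 0 := by
  rw [Multiset.eq_zero_iff_forall_notMem]
  intro a ha
  have h1 := μ.parts_pos ha
  have h2 : a ≤ μ.parts.sum := Multiset.le_sum_of_mem ha
  rw [μ.parts_sum] at h2
  omega

lemma P_zero (wt : ℕ → ℚ) : P wt 0 = 1 := by
  unfold P
  have h1 : ∀ μ : Nat.Partition 0, mw wt μ.parts = 1 := by
    intro μ
    rw [parts_zero μ]
    simp [mw]
  simp only [h1]
  simp

lemma map_inv_prod (s : Multiset ℕ) :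
    (s.map fun p : ℕ => ((p : ℚ) : ℚ)⁻¹).prod = ((s.prod : ℕ) : ℚ)⁻¹ := by
  induction s using Multiset.induction_on with
  | empty => simp
  | cons a t ih =>
    simp only [Multiset.map_cons, Multiset.prod_cons, ih]
    push_cast
    rw [mul_inv]

lemma map_w_prod (s : Multiset ℕ) :
    (s.map w).prod = (-(1 : ℚ) / 2) ^ Multiset.card s
      * (s.map fun p : ℕ => ((p : ℚ) : ℚ)⁻¹).prod
      * 2 ^ (2 * s.sum)
      * (s.map fun p => ((2 : ℚ) ^ (2 * p) - 1)).prod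
      * (s.map fun p => bernoulli' (2 * p) / ((2 * p).factorial : ℚ)).prod := by
  induction s using Multiset.induction_on with
  | empty => simp
  | cons a t ih =>
    simp only [Multiset.map_cons, Multiset.prod_cons, Multiset.card_cons, Multiset.sum_cons]
    rw [ih, w_apply, show 2 * (a + t.sum) = 2 * a + 2 * t.sum from by ring, pow_add, pow_succ]
    ring

lemma zPart_eq {d : ℕ} (μ : Nat.Partition d) :
    (zPart μ : ℚ) = ((μ.parts.prod : ℕ) : ℚ)
      * ∏ i ∈ μ.parts.toFinset, ((μ.parts.count i).factorial : ℚ) := by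
  have h1 : zPart μ = μ.parts.prod * ∏ i ∈ μ.parts.toFinset, (μ.parts.count i).factorial := by
    rw [zPart, Finset.prod_mul_distrib, ← Finset.prod_multiset_count]
  rw [h1]
  push_cast
  ring

lemma mw_eq {d : ℕ} (μ : Nat.Partition d) :
    mw w μ.parts = 2 ^ (2 * d) *
      ((1 / (zPart μ : ℚ)) * ((-1 : ℚ) ^ μ.parts.card / 2 ^ μ.parts.card) *
        (μ.parts.map fun p => ((2 : ℚ) ^ (2 * p) - 1)).prod *
        (μ.parts.map fun p => bernoulli' (2 * p) / ((2 * p).factorial : ℚ)).prod) := by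
  have hsum : μ.parts.sum = d := μ.parts_sum
  rw [mw, map_w_prod, map_inv_prod, hsum, zPart_eq μ]
  rw [show (-(1 : ℚ) / 2) ^ Multiset.card μ.parts
      = (-1 : ℚ) ^ Multiset.card μ.parts * ((2 : ℚ) ^ Multiset.card μ.parts)⁻¹ by
    rw [div_pow, neg_pow, div_eq_mul_inv]]
  simp only [div_eq_mul_inv, mul_inv, one_mul]
  ring

end EulerAux

/-- **Formula (4.7)**: for every `d ≥ 1`, the Euler number `E_{2d}` is the following
sum of products of Bernoulli numbers:
`E_{2d} = 2^{2d}(2d)! Σ_{μ ⊢ d} (1/z_μ) ((-1)^{ℓ(μ)}/2^{ℓ(μ)})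
(∏_j (2^{2μ_j}-1)) ∏_j B_{2μ_j}/(2μ_j)!`. -/
theorem euler_number_as_sum_of_bernoulli (d : ℕ) (hd : 1 ≤ d) :
    eulerNumber (2 * d) =
      2 ^ (2 * d) * ((2 * d).factorial : ℚ) *
        ∑ μ : Nat.Partition d,
          (1 / (zPart μ : ℚ)) * ((-1 : ℚ) ^ μ.parts.card / 2 ^ μ.parts.card) *
            (μ.parts.map fun p => ((2 : ℚ) ^ (2 * p) - 1)).prod *
            (μ.parts.map fun p => bernoulli' (2 * p) / ((2 * p).factorial : ℚ)).prod := by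
  have hkey : ∀ n, PowerSeries.coeff (2 * n) EulerAux.Sser = EulerAux.P EulerAux.w n :=
    EulerAux.rec_unique EulerAux.w (fun n => PowerSeries.coeff (2 * n) EulerAux.Sser)
      (EulerAux.P EulerAux.w)
      (by simpa using (EulerAux.e_zero.trans (EulerAux.P_zero EulerAux.w).symm))
      (fun n hn => EulerAux.e_rec_w n hn) (fun n _ => EulerAux.P_rec EulerAux.w n)
  have h1 : eulerNumber (2 * d)
      = ((2 * d).factorial : ℚ) * PowerSeries.coeff (2 * d) EulerAux.Sser := rfl
  rw [h1, hkey d]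
  unfold EulerAux.P
  rw [Finset.sum_congr rfl (fun μ _ => EulerAux.mw_eq μ), ← Finset.mul_sum]
  ring

end
end
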